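/- arXiv:2406.07825 — 3 statements merged into one kernel-verified Lean document; each statement's English description precedes it below -/
import Mathlib

section
/- Strong duality for the shape-constrained distributional optimization problem: under Assumptions 1, 2 and 3, val(P) = val(D). -/
open MeasureTheory Filter Set Topology RealInnerProductSpace

noncomputable section

namespace ShapeDRO

private lemma nonpos_of_forall_mul_le {a K : ℝ} (h : ∀ r : ℝ, 0 < r → a * r ≤ K) : a ≤ 0 := by
  by_contra hpos
  push_neg at hpos
  have h1 := h ((|K| + 1) / a) (div_pos (by positivity) hpos)
  rw [mul_div_cancel₀ _ (ne_of_gt hpos)] at h1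
  have h2 : K ≤ |K| := le_abs_self K
  linarith

private lemma nonpos_of_forall_le_mul {X D : ℝ} (hD : 0 ≤ D)
    (h : ∀ ε : ℝ, 0 < ε → X ≤ ε * D) : X ≤ 0 := by
  by_contra hpos
  push_neg at hpos
  have h1 := h (X / (2 * (D + 1))) (by positivity)
  have h2 : X / (2 * (D + 1)) * D < X := by
    rw [div_mul_eq_mul_div, div_lt_iff₀ (by positivity)]
    nlinarith
  linarith

private lemma div_nonneg_of_nonpos_of_nonpos_real {a b : ℝ} (ha : a ≤ 0) (hb : b ≤ 0) :
    0 ≤ a / b := div_nonneg_iff.2 (Or.inr ⟨ha, hb⟩)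

/-- Separation of the origin from a convex set in Euclidean space. -/
private lemma sep_origin {d : ℕ} {c : Set (EuclideanSpace ℝ (Fin d))} (hc : Convex ℝ c)
    (hne : c.Nonempty) (h0 : (0 : EuclideanSpace ℝ (Fin d)) ∉ c) :
    ∃ w : EuclideanSpace ℝ (Fin d), w ≠ 0 ∧ ∀ y ∈ c, ⟪w, y⟫ ≤ 0 := by
  -- Step 1: the origin is not in the interior of the closure of `c`.
  have hni : (0 : EuclideanSpace ℝ (Fin d)) ∉ interior (closure c) := by
    intro hmem
    have hspan : affineSpan ℝ (closure c) = ⊤ :=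
      (hc.closure.interior_nonempty_iff_affineSpan_eq_top).1 ⟨0, hmem⟩
    have hsub : closure c ⊆ (affineSpan ℝ c : Set _) :=
      closure_minimal (subset_affineSpan ℝ c) (affineSpan ℝ c).closed_of_finiteDimensional
    have hspan' : affineSpan ℝ c = ⊤ := by
      have h1 : affineSpan ℝ (closure c) ≤ affineSpan ℝ c := affineSpan_le.2 hsub
      rw [hspan] at h1
      exact top_le_iff.1 h1
    obtain ⟨x0, hx0⟩ := hc.interior_nonempty_iff_affineSpan_eq_top.2 hspan'
    by_cases hx0z : x0 = 0
    · exact h0 (interior_subset (hx0z ▸ hx0))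
    · obtain ⟨ε, hε, hball⟩ := Metric.mem_nhds_iff.1 (mem_interior_iff_mem_nhds.1 hmem)
      have hx0n : 0 < ‖x0‖ := norm_pos_iff.2 hx0z
      set δ : ℝ := ε / (2 * ‖x0‖) with hδ
      have hδpos : 0 < δ := by positivity
      have hz' : -δ • x0 ∈ closure c := by
        apply hball
        rw [Metric.mem_ball, dist_zero_right, norm_smul, norm_neg]
        rw [Real.norm_eq_abs, abs_of_pos hδpos]
        rw [hδ, div_mul_eq_mul_div, div_lt_iff₀ (by positivity)]
        nlinarith
      have hcombo : (0 : EuclideanSpace ℝ (Fin d)) ∈ interior c := by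
        have h1 : (1 / (1 + δ)) • (-δ • x0) + (δ / (1 + δ)) • x0
            = (0 : EuclideanSpace ℝ (Fin d)) := by
          rw [smul_smul]
          rw [← add_smul]
          have : 1 / (1 + δ) * -δ + δ / (1 + δ) = 0 := by
            field_simp
            ring
          rw [this, zero_smul]
        have := hc.combo_closure_interior_mem_interior hz' hx0
          (a := 1 / (1 + δ)) (b := δ / (1 + δ)) (by positivity) (by positivity)
          (by field_simp)
        rw [h1] at this
        exact this
      exact h0 (interior_subset hcombo)
  -- Step 2: approximating points outside the closure.
  have hx : ∀ n : ℕ, ∃ x : EuclideanSpace ℝ (Fin d),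
      x ∉ closure c ∧ ‖x‖ < 1 / (n + 1) := by
    intro n
    have h1 : (0 : EuclideanSpace ℝ (Fin d)) ∈ closure ((closure c)ᶜ) := by
      rw [closure_compl]
      simpa using hni
    obtain ⟨x, hx1, hx2⟩ := Metric.mem_closure_iff.1 h1 (1 / (n + 1)) (by positivity)
    exact ⟨x, hx1, by rwa [dist_comm, dist_zero_right] at hx2⟩
  choose x hx1 hx2 using hx
  -- Step 3: for each n, a unit separating vector.
  have key : ∀ n : ℕ, ∃ w : EuclideanSpace ℝ (Fin d), ‖w‖ = 1 ∧
      ∀ y ∈ c, ⟪w, y⟫ ≤ 1 / (n + 1) := by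
    intro n
    obtain ⟨f, u, hfu, hux⟩ :=
      geometric_hahn_banach_closed_point hc.closure isClosed_closure (hx1 n)
    obtain ⟨y0, hy0⟩ := hne
    have hfne : f ≠ 0 := by
      intro hf
      have h1 : f y0 < u := hfu y0 (subset_closure hy0)
      have h2 : u < f (x n) := hux
      rw [hf] at h1 h2
      simp at h1 h2
      linarith
    set w' : EuclideanSpace ℝ (Fin d) := (InnerProductSpace.toDual ℝ _).symm f with hw'
    have hw'app : ∀ y, ⟪w', y⟫ = f y := fun y => InnerProductSpace.toDual_symm_apply
    have hw'ne : w' ≠ 0 := by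
      intro hz
      apply hfne
      ext y
      have := hw'app y
      rw [hz] at this
      simpa using this.symm
    have hunit : ‖‖w'‖⁻¹ • w'‖ = 1 := by
      rw [norm_smul, norm_inv, norm_norm]
      exact inv_mul_cancel₀ (norm_ne_zero_iff.2 hw'ne)
    refine ⟨‖w'‖⁻¹ • w', hunit, fun y hy => ?_⟩
    have hpos : (0 : ℝ) < ‖w'‖⁻¹ := by
      rw [inv_pos]; exact norm_pos_iff.2 hw'ne
    have h1 : ⟪‖w'‖⁻¹ • w', y⟫ < ⟪‖w'‖⁻¹ • w', x n⟫ := by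
      rw [real_inner_smul_left, real_inner_smul_left, hw'app, hw'app]
      exact mul_lt_mul_of_pos_left (lt_trans (hfu y (subset_closure hy)) hux) hpos
    have h2 : ⟪‖w'‖⁻¹ • w', x n⟫ ≤ ‖x n‖ := by
      calc ⟪‖w'‖⁻¹ • w', x n⟫ ≤ ‖‖w'‖⁻¹ • w'‖ * ‖x n‖ := real_inner_le_norm _ _
        _ = ‖x n‖ := by rw [hunit, one_mul]
    linarith [hx2 n]
  choose wseq hwnorm hwle using key
  obtain ⟨w, hwmem, ψ, hψ, hlim⟩ := (isCompact_sphere (0 : EuclideanSpace ℝ (Fin d)) 1).tendsto_subseq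
    (fun n => by rw [mem_sphere_zero_iff_norm]; exact hwnorm n)
  refine ⟨w, ?_, fun y hy => ?_⟩
  · intro hz
    rw [hz, mem_sphere_zero_iff_norm] at hwmem
    simp at hwmem
  · have hA : Tendsto (fun i => ⟪wseq (ψ i), y⟫) atTop (𝓝 ⟪w, y⟫) :=
      hlim.inner tendsto_const_nhds
    have hB : Tendsto (fun i : ℕ => 1 / ((ψ i : ℝ) + 1)) atTop (𝓝 0) :=
      tendsto_one_div_add_atTop_nhds_zero_nat.comp hψ.tendsto_atTop
    exact le_of_tendsto_of_tendsto' hA hB (fun i => hwle (ψ i) y hy)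


variable {N : ℕ}

/-- Expectation under the sampling density `g` over the domain `𝒳`:
`E_g[h] = ∫_𝒳 h(x) g(x) dx`. -/
def Eg (𝒳 : Set (Fin N → ℝ)) (g h : (Fin N → ℝ) → ℝ) : ℝ :=
  ∫ x in 𝒳, h x * g x

/-- The feasible set of the primal problem (P): `L ∈ 𝓛` satisfying the
inequality moment constraints (indices `j < m`) and the equality moment
constraints (indices `m ≤ j`). -/
def feasible (𝒳 : Set (Fin N → ℝ)) (g : (Fin N → ℝ) → ℝ) {l : ℕ} (m : ℕ)
    (φ : Fin l → (Fin N → ℝ) → ℝ) (μc : Fin l → ℝ)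
    (𝓛 : Set ((Fin N → ℝ) → ℝ)) : Set ((Fin N → ℝ) → ℝ) :=
  {L ∈ 𝓛 | ∀ j : Fin l,
    ((j : ℕ) < m → Eg 𝒳 g (fun x => φ j x * L x) ≤ μc j) ∧
    (m ≤ (j : ℕ) → Eg 𝒳 g (fun x => φ j x * L x) = μc j)}

/-- The optimal value of the primal problem (P), as an extended real
(`⊥ = -∞` if there is no feasible solution). -/
def valP (𝒳 : Set (Fin N → ℝ)) (g : (Fin N → ℝ) → ℝ) {l : ℕ} (m : ℕ)
    (φ0 : (Fin N → ℝ) → ℝ) (φ : Fin l → (Fin N → ℝ) → ℝ) (μc : Fin l → ℝ)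
    (𝓛 : Set ((Fin N → ℝ) → ℝ)) : EReal :=
  sSup ((fun L => ((Eg 𝒳 g (fun x => φ0 x * L x) : ℝ) : EReal)) ''
    feasible 𝒳 g m φ μc 𝓛)

/-- The set of admissible Lagrange multipliers `Λ = ℝ₊^m × ℝ^{l-m}`. -/
def multipliers (l m : ℕ) : Set (Fin l → ℝ) :=
  {lam | ∀ j : Fin l, (j : ℕ) < m → 0 ≤ lam j}

/-- The optimal value of the Lagrangian dual problem (D). -/
def valD (𝒳 : Set (Fin N → ℝ)) (g : (Fin N → ℝ) → ℝ) {l : ℕ} (m : ℕ)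
    (φ0 : (Fin N → ℝ) → ℝ) (φ : Fin l → (Fin N → ℝ) → ℝ) (μc : Fin l → ℝ)
    (𝓛 : Set ((Fin N → ℝ) → ℝ)) : EReal :=
  ⨅ lam ∈ multipliers l m,
    sSup ((fun L => ((Eg 𝒳 g (fun x => φ0 x * L x)
      - ∑ j : Fin l, lam j * (Eg 𝒳 g (fun x => φ j x * L x) - μc j) : ℝ) : EReal)) '' 𝓛)

/-- **Theorem 1 (strong duality)**: under Assumptions 1 (integrability),
2 (convexity of `𝓛`) and 3 (Slater condition), `val(P) = val(D)`. -/
theorem strong_duality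
    (𝒳 : Set (Fin N → ℝ)) (h𝒳 : MeasurableSet 𝒳)
    (g : (Fin N → ℝ) → ℝ) (hg_meas : Measurable g)
    (hg_pos : ∀ x ∈ 𝒳, 0 < g x) (hg_prob : ∫ x in 𝒳, g x = 1)
    (l m : ℕ) (hml : m ≤ l)
    (φ0 : (Fin N → ℝ) → ℝ) (φ : Fin l → (Fin N → ℝ) → ℝ) (μc : Fin l → ℝ)
    (hφ0_meas : Measurable φ0) (hφ_meas : ∀ j, Measurable (φ j))
    (𝓛 : Set ((Fin N → ℝ) → ℝ))
    (h𝓛_meas : ∀ L ∈ 𝓛, Measurable L) (h𝓛_nonneg : ∀ L ∈ 𝓛, ∀ x ∈ 𝒳, 0 ≤ L x)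
    -- Assumption 1 (integrability):
    (hint0 : ∀ L ∈ 𝓛, IntegrableOn (fun x => φ0 x * L x * g x) 𝒳)
    (hint : ∀ L ∈ 𝓛, ∀ j : Fin l, IntegrableOn (fun x => φ j x * L x * g x) 𝒳)
    -- Assumption 2 (convexity):
    (hconv : ∀ L1 ∈ 𝓛, ∀ L2 ∈ 𝓛, ∀ t : ℝ, 0 ≤ t → t ≤ 1 →
      (fun x => t * L1 x + (1 - t) * L2 x) ∈ 𝓛)
    -- Assumption 3 (Slater condition):
    (hslater : ∃ L0 ∈ 𝓛,
      (∀ j : Fin l, (j : ℕ) < m → Eg 𝒳 g (fun x => φ j x * L0 x) < μc j) ∧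
      (∀ j : Fin l, m ≤ (j : ℕ) → Eg 𝒳 g (fun x => φ j x * L0 x) = μc j))
    (hinterior : (fun j : Fin l => μc j) ∈
      interior {v : Fin l → ℝ | ∃ L ∈ 𝓛,
        ∀ j : Fin l, m ≤ (j : ℕ) → v j = Eg 𝒳 g (fun x => φ j x * L x)}) :
    valP 𝒳 g m φ0 φ μc 𝓛 = valD 𝒳 g m φ0 φ μc 𝓛 := by
  classical
  obtain ⟨L0, hL0mem, hL0lt, hL0eq⟩ := hslater
  -- linearity of `Eg` on convex combinations
  have hlin : ∀ (ψ : (Fin N → ℝ) → ℝ) (L1 L2 : (Fin N → ℝ) → ℝ),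
      IntegrableOn (fun x => ψ x * L1 x * g x) 𝒳 →
      IntegrableOn (fun x => ψ x * L2 x * g x) 𝒳 → ∀ t : ℝ,
      Eg 𝒳 g (fun x => ψ x * (t * L1 x + (1 - t) * L2 x)) =
        t * Eg 𝒳 g (fun x => ψ x * L1 x) + (1 - t) * Eg 𝒳 g (fun x => ψ x * L2 x) := by
    intro ψ L1 L2 h1 h2 t
    have heq : Eg 𝒳 g (fun x => ψ x * (t * L1 x + (1 - t) * L2 x))
        = ∫ x in 𝒳, (t * (ψ x * L1 x * g x) + (1 - t) * (ψ x * L2 x * g x)) := by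
      simp only [Eg]
      congr 1
      funext x
      ring
    rw [heq, integral_add (h1.const_mul t) (h2.const_mul (1 - t)),
      integral_const_mul, integral_const_mul]
    simp only [Eg]
  -- weak duality
  have hweak : valP 𝒳 g m φ0 φ μc 𝓛 ≤ valD 𝒳 g m φ0 φ μc 𝓛 := by
    rw [valD]
    refine le_iInf₂ fun lam hlam => ?_
    rw [valP]
    refine sSup_le ?_
    rintro v ⟨L, hLf, rfl⟩
    obtain ⟨hL, hLc⟩ := hLf
    refine le_trans ?_ (le_sSup ⟨L, hL, rfl⟩)
    rw [EReal.coe_le_coe_iff]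
    have hsum : (∑ j : Fin l, lam j * (Eg 𝒳 g (fun x => φ j x * L x) - μc j)) ≤ 0 := by
      apply Finset.sum_nonpos
      intro j _
      rcases lt_or_ge (j : ℕ) m with hj | hj
      · exact mul_nonpos_of_nonneg_of_nonpos (hlam j hj) (by linarith [(hLc j).1 hj])
      · rw [(hLc j).2 hj]
        simp
    linarith
  refine le_antisymm hweak ?_
  by_cases htop : valP 𝒳 g m φ0 φ μc 𝓛 = ⊤
  · rw [htop]
    exact le_top
  have hfeas0 : L0 ∈ feasible 𝒳 g m φ μc 𝓛 :=
    ⟨hL0mem, fun j => ⟨fun hj => (hL0lt j hj).le, fun hj => hL0eq j hj⟩⟩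
  have hbot : valP 𝒳 g m φ0 φ μc 𝓛 ≠ ⊥ := by
    intro h
    have h1 : ((Eg 𝒳 g (fun x => φ0 x * L0 x) : ℝ) : EReal) ≤ valP 𝒳 g m φ0 φ μc 𝓛 :=
      le_sSup ⟨L0, hfeas0, rfl⟩
    rw [h] at h1
    exact (EReal.bot_lt_coe _).not_ge h1
  set p : ℝ := (valP 𝒳 g m φ0 φ μc 𝓛).toReal with hp
  have hvP : valP 𝒳 g m φ0 φ μc 𝓛 = (p : EReal) := (EReal.coe_toReal htop hbot).symm
  have hub : ∀ L ∈ feasible 𝒳 g m φ μc 𝓛, Eg 𝒳 g (fun x => φ0 x * L x) ≤ p := by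
    intro L hL
    have h1 : ((Eg 𝒳 g (fun x => φ0 x * L x) : ℝ) : EReal) ≤ (p : EReal) := by
      rw [← hvP]
      exact le_sSup ⟨L, hL, rfl⟩
    exact EReal.coe_le_coe_iff.1 h1
  -- the convex set to be separated from the origin
  have hcconv : Convex ℝ {z : EuclideanSpace ℝ (Fin (l + 1)) | ∃ L ∈ 𝓛,
      (p - Eg 𝒳 g (fun x => φ0 x * L x) < z 0) ∧ ∀ j : Fin l,
      ((j : ℕ) < m → Eg 𝒳 g (fun x => φ j x * L x) - μc j ≤ z j.succ) ∧
      (m ≤ (j : ℕ) → z j.succ = Eg 𝒳 g (fun x => φ j x * L x) - μc j)} := by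
    rintro z1 ⟨L1, hL1, hz10, hz1j⟩ z2 ⟨L2, hL2, hz20, hz2j⟩ aa bb haa hbb hab
    have hbb' : bb = 1 - aa := by linarith
    subst hbb'
    have haa1 : aa ≤ 1 := by linarith
    refine ⟨fun x => aa * L1 x + (1 - aa) * L2 x, hconv L1 hL1 L2 hL2 aa haa haa1, ?_, ?_⟩
    · have hE : Eg 𝒳 g (fun x => φ0 x * (aa * L1 x + (1 - aa) * L2 x))
          = aa * Eg 𝒳 g (fun x => φ0 x * L1 x) + (1 - aa) * Eg 𝒳 g (fun x => φ0 x * L2 x) :=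
        hlin φ0 L1 L2 (hint0 L1 hL1) (hint0 L2 hL2) aa
      have happ : (aa • z1 + (1 - aa) • z2) 0 = aa * z1 0 + (1 - aa) * z2 0 := rfl
      rw [happ, hE]
      rcases lt_or_eq_of_le hbb with hbbpos | hbbz
      · linarith [mul_le_mul_of_nonneg_left hz10.le haa, mul_lt_mul_of_pos_left hz20 hbbpos]
      · have haaeq : aa = 1 := by linarith
        subst haaeq
        linarith [hz10]
    · intro j
      have hE : Eg 𝒳 g (fun x => φ j x * (aa * L1 x + (1 - aa) * L2 x))
          = aa * Eg 𝒳 g (fun x => φ j x * L1 x) + (1 - aa) * Eg 𝒳 g (fun x => φ j x * L2 x) :=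
        hlin (φ j) L1 L2 (hint L1 hL1 j) (hint L2 hL2 j) aa
      have happ : (aa • z1 + (1 - aa) • z2) j.succ = aa * z1 j.succ + (1 - aa) * z2 j.succ := rfl
      constructor
      · intro hj
        rw [happ, hE]
        linarith [mul_le_mul_of_nonneg_left ((hz1j j).1 hj) haa,
          mul_le_mul_of_nonneg_left ((hz2j j).1 hj) hbb]
      · intro hj
        rw [happ, hE, (hz1j j).2 hj, (hz2j j).2 hj]
        ring
  have hcne : Set.Nonempty {z : EuclideanSpace ℝ (Fin (l + 1)) | ∃ L ∈ 𝓛,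
      (p - Eg 𝒳 g (fun x => φ0 x * L x) < z 0) ∧ ∀ j : Fin l,
      ((j : ℕ) < m → Eg 𝒳 g (fun x => φ j x * L x) - μc j ≤ z j.succ) ∧
      (m ≤ (j : ℕ) → z j.succ = Eg 𝒳 g (fun x => φ j x * L x) - μc j)} := by
    refine ⟨(WithLp.toLp 2 (fun i : Fin (l + 1) => Fin.cases (motive := fun _ => ℝ) (p - Eg 𝒳 g (fun x => φ0 x * L0 x) + 1)
      (fun j => Eg 𝒳 g (fun x => φ j x * L0 x) - μc j) i) :
        EuclideanSpace ℝ (Fin (l + 1))), L0, hL0mem, ?_, ?_⟩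
    · simp only [PiLp.toLp_apply, Fin.cases_zero]
      linarith
    · intro j
      constructor
      · intro hj
        simp only [PiLp.toLp_apply, Fin.cases_succ]
        exact le_refl _
      · intro hj
        simp only [PiLp.toLp_apply, Fin.cases_succ]
  have hc0 : (0 : EuclideanSpace ℝ (Fin (l + 1))) ∉ {z : EuclideanSpace ℝ (Fin (l + 1)) | ∃ L ∈ 𝓛,
      (p - Eg 𝒳 g (fun x => φ0 x * L x) < z 0) ∧ ∀ j : Fin l,
      ((j : ℕ) < m → Eg 𝒳 g (fun x => φ j x * L x) - μc j ≤ z j.succ) ∧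
      (m ≤ (j : ℕ) → z j.succ = Eg 𝒳 g (fun x => φ j x * L x) - μc j)} := by
    rintro ⟨L, hL, h0c, hjc⟩
    have h00 : (0 : EuclideanSpace ℝ (Fin (l + 1))) 0 = 0 := rfl
    have h0s : ∀ j : Fin l, (0 : EuclideanSpace ℝ (Fin (l + 1))) j.succ = 0 := fun j => rfl
    rw [h00] at h0c
    have hfeas : L ∈ feasible 𝒳 g m φ μc 𝓛 := by
      refine ⟨hL, fun j => ⟨fun hj => ?_, fun hj => ?_⟩⟩
      · have h1 := (hjc j).1 hj
        rw [h0s j] at h1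
        linarith
      · have h1 := (hjc j).2 hj
        rw [h0s j] at h1
        linarith
    linarith [hub L hfeas]
  obtain ⟨w, hwne, hw⟩ := sep_origin hcconv hcne hc0
  have hinner : ∀ z : EuclideanSpace ℝ (Fin (l + 1)),
      (inner ℝ w z : ℝ) = w 0 * z 0 + ∑ j : Fin l, w j.succ * z j.succ := by
    intro z
    rw [PiLp.inner_apply]
    simp only [RCLike.inner_apply', conj_trivial]
    exact Fin.sum_univ_succ _
  -- the master inequality obtained from the separating hyperplane
  have hkey : ∀ L ∈ 𝓛, ∀ r : ℝ, 0 < r → ∀ q : Fin l → ℝ,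
      (∀ j : Fin l, (j : ℕ) < m → 0 ≤ q j) → (∀ j : Fin l, m ≤ (j : ℕ) → q j = 0) →
      w 0 * (p - Eg 𝒳 g (fun x => φ0 x * L x) + r)
        + ∑ j : Fin l, w j.succ * (Eg 𝒳 g (fun x => φ j x * L x) - μc j + q j) ≤ 0 := by
    intro L hL r hr q hq1 hq2
    have hmem : (WithLp.toLp 2 (fun i : Fin (l + 1) => Fin.cases (motive := fun _ => ℝ) (p - Eg 𝒳 g (fun x => φ0 x * L x) + r)
        (fun j => Eg 𝒳 g (fun x => φ j x * L x) - μc j + q j) i) :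
          EuclideanSpace ℝ (Fin (l + 1))) ∈ {z : EuclideanSpace ℝ (Fin (l + 1)) | ∃ L ∈ 𝓛,
        (p - Eg 𝒳 g (fun x => φ0 x * L x) < z 0) ∧ ∀ j : Fin l,
        ((j : ℕ) < m → Eg 𝒳 g (fun x => φ j x * L x) - μc j ≤ z j.succ) ∧
        (m ≤ (j : ℕ) → z j.succ = Eg 𝒳 g (fun x => φ j x * L x) - μc j)} := by
      refine ⟨L, hL, ?_, ?_⟩
      · simp only [PiLp.toLp_apply, Fin.cases_zero]
        linarith
      · intro j
        constructor
        · intro hj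
          simp only [PiLp.toLp_apply, Fin.cases_succ]
          linarith [hq1 j hj]
        · intro hj
          simp only [PiLp.toLp_apply, Fin.cases_succ, hq2 j hj, add_zero]
    have h1 := hw _ hmem
    rw [hinner] at h1
    simp only [PiLp.toLp_apply, Fin.cases_zero, Fin.cases_succ] at h1
    exact h1
  -- consequences of `hkey`
  have ha : w 0 ≤ 0 := by
    apply nonpos_of_forall_mul_le
      (K := -(w 0 * (p - Eg 𝒳 g (fun x => φ0 x * L0 x))
        + ∑ j : Fin l, w j.succ * (Eg 𝒳 g (fun x => φ j x * L0 x) - μc j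
          + (if (j : ℕ) < m then 1 else 0))))
    intro r hr
    have h1 := hkey L0 hL0mem r hr (fun j => if (j : ℕ) < m then (1 : ℝ) else 0)
      (fun j hj => by
        show (0:ℝ) ≤ if (j : ℕ) < m then (1:ℝ) else 0
        rw [if_pos hj]; norm_num)
      (fun j hj => by
        show (if (j : ℕ) < m then (1:ℝ) else 0) = 0
        rw [if_neg (by omega)])
    have hexp : w 0 * (p - Eg 𝒳 g (fun x => φ0 x * L0 x) + r)
        = w 0 * (p - Eg 𝒳 g (fun x => φ0 x * L0 x)) + w 0 * r := by ring
    rw [hexp] at h1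
    linarith
  have hb : ∀ j0 : Fin l, (j0 : ℕ) < m → w j0.succ ≤ 0 := by
    intro j0 hj0
    apply nonpos_of_forall_mul_le
      (K := -(w 0 * (p - Eg 𝒳 g (fun x => φ0 x * L0 x) + 1)
        + ∑ j : Fin l, w j.succ * (Eg 𝒳 g (fun x => φ j x * L0 x) - μc j)))
    intro sv hsv
    have h1 := hkey L0 hL0mem 1 one_pos (fun j => if j = j0 then sv else 0)
      (fun j hj => by
        show (0:ℝ) ≤ if j = j0 then sv else 0
        split
        · exact hsv.le
        · exact le_rfl)
      (fun j hj => by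
        show (if j = j0 then sv else 0) = 0
        have hne : j ≠ j0 := by
          intro hh
          subst hh
          omega
        rw [if_neg hne])
    have hsplit : ∑ j : Fin l, w j.succ * (Eg 𝒳 g (fun x => φ j x * L0 x) - μc j
          + (if j = j0 then sv else 0))
        = (∑ j : Fin l, w j.succ * (Eg 𝒳 g (fun x => φ j x * L0 x) - μc j))
          + w j0.succ * sv := by
      simp only [mul_add]
      rw [Finset.sum_add_distrib]
      congr 1
      simp only [mul_ite, mul_zero]
      simp
    rw [hsplit] at h1
    linarith
  have hF : ∀ L ∈ 𝓛, w 0 * (p - Eg 𝒳 g (fun x => φ0 x * L x))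
      + ∑ j : Fin l, w j.succ * (Eg 𝒳 g (fun x => φ j x * L x) - μc j) ≤ 0 := by
    intro L hL
    apply nonpos_of_forall_le_mul
      (D := -(w 0 + ∑ j : Fin l, if (j : ℕ) < m then w j.succ else 0))
    · have h1 : (∑ j : Fin l, if (j : ℕ) < m then w j.succ else 0) ≤ 0 := by
        apply Finset.sum_nonpos
        intro j _
        split
        · exact hb j ‹_›
        · exact le_refl 0
      linarith
    · intro ε hε
      have h1 := hkey L hL ε hε (fun j => if (j : ℕ) < m then ε else 0)
        (fun j hj => by
          show (0:ℝ) ≤ if (j : ℕ) < m then ε else 0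
          rw [if_pos hj]; exact hε.le)
        (fun j hj => by
          show (if (j : ℕ) < m then ε else 0) = 0
          rw [if_neg (by omega)])
      have hsplit : ∑ j : Fin l, w j.succ * (Eg 𝒳 g (fun x => φ j x * L x) - μc j
            + (if (j : ℕ) < m then ε else 0))
          = (∑ j : Fin l, w j.succ * (Eg 𝒳 g (fun x => φ j x * L x) - μc j))
            + (∑ j : Fin l, if (j : ℕ) < m then w j.succ else 0) * ε := by
        simp only [mul_add]
        rw [Finset.sum_add_distrib, Finset.sum_mul]
        congr 1
        apply Finset.sum_congr rfl
        intro j _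
        split_ifs <;> ring
      have hexp : w 0 * (p - Eg 𝒳 g (fun x => φ0 x * L x) + ε)
          = w 0 * (p - Eg 𝒳 g (fun x => φ0 x * L x)) + w 0 * ε := by ring
      rw [hexp, hsplit] at h1
      nlinarith [h1]
  -- the multiplier of the objective is nonzero
  have haneg : w 0 < 0 := by
    rcases lt_or_eq_of_le ha with h | h
    · exact h
    · exfalso
      have hF0 : ∀ L ∈ 𝓛,
          (∑ j : Fin l, w j.succ * (Eg 𝒳 g (fun x => φ j x * L x) - μc j)) ≤ 0 := by
        intro L hL
        have h1 := hF L hL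
        rw [h] at h1
        simpa using h1
      have h2 : ∀ j ∈ Finset.univ, (0:ℝ) ≤ w j.succ * (Eg 𝒳 g (fun x => φ j x * L0 x) - μc j) := by
        intro j _
        rcases lt_or_ge (j : ℕ) m with hj | hj
        · have hneg : Eg 𝒳 g (fun x => φ j x * L0 x) - μc j ≤ 0 := by linarith [hL0lt j hj]
          nlinarith [hb j hj]
        · rw [hL0eq j hj]
          simp
      have hsum0 : ∀ j : Fin l, w j.succ * (Eg 𝒳 g (fun x => φ j x * L0 x) - μc j) = 0 := by
        intro j
        exact (Finset.sum_eq_zero_iff_of_nonneg h2).1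
          (le_antisymm (hF0 L0 hL0mem) (Finset.sum_nonneg h2)) j (Finset.mem_univ j)
      have hbm : ∀ j : Fin l, (j : ℕ) < m → w j.succ = 0 := by
        intro j hj
        rcases mul_eq_zero.1 (hsum0 j) with h2 | h2
        · exact h2
        · exfalso
          have := hL0lt j hj
          linarith [h2]
      have hbM : ∀ j : Fin l, m ≤ (j : ℕ) → w j.succ = 0 := by
        by_contra hcon
        push_neg at hcon
        obtain ⟨j0, hj0m, hj0ne⟩ := hcon
        obtain ⟨ε, hε, hball⟩ := Metric.mem_nhds_iff.1 (mem_interior_iff_mem_nhds.1 hinterior)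
        have hε2 : (0:ℝ) < ε / 2 := by linarith
        set sv : ℝ := if w j0.succ < 0 then -(ε / 2) else ε / 2 with hsdef
        have hspos : 0 < w j0.succ * sv := by
          rw [hsdef]
          rcases lt_or_gt_of_ne hj0ne with h2 | h2
          · rw [if_pos h2]
            exact mul_pos_of_neg_of_neg h2 (by linarith)
          · rw [if_neg (not_lt.2 h2.le)]
            exact mul_pos h2 hε2
        have habs : |sv| = ε / 2 := by
          rw [hsdef]
          split
          · rw [abs_neg, abs_of_pos hε2]
          · rw [abs_of_pos hε2]
        have hvmem : Function.update μc j0 (μc j0 + sv) ∈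
            {v : Fin l → ℝ | ∃ L ∈ 𝓛,
              ∀ j : Fin l, m ≤ (j : ℕ) → v j = Eg 𝒳 g (fun x => φ j x * L x)} := by
          apply hball
          rw [Metric.mem_ball]
          rw [show (fun j : Fin l => μc j) = μc from rfl]
          rw [dist_pi_lt_iff hε]
          intro i
          by_cases hi : i = j0
          · subst hi
            rw [Function.update_self, Real.dist_eq]
            rw [show μc i + sv - μc i = sv by ring]
            rw [habs]
            linarith
          · rw [Function.update_of_ne hi]
            simpa using hε
        obtain ⟨L1, hL1mem, hL1eq⟩ := hvmem
        have h1 := hF0 L1 hL1mem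
        have h2' : ∑ j : Fin l, w j.succ * (Eg 𝒳 g (fun x => φ j x * L1 x) - μc j)
            = w j0.succ * sv := by
          rw [Finset.sum_eq_single j0]
          · rw [← hL1eq j0 hj0m, Function.update_self]
            ring
          · intro j _ hne
            rcases lt_or_ge (j : ℕ) m with hj | hj
            · rw [hbm j hj, zero_mul]
            · rw [← hL1eq j hj, Function.update_of_ne hne]
              ring
          · intro hmem
            exact absurd (Finset.mem_univ j0) hmem
        rw [h2'] at h1
        linarith
      apply hwne
      ext i
      induction i using Fin.cases with
      | zero => exact h
      | succ j =>
        rcases lt_or_ge (j : ℕ) m with hj | hj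
        · exact hbm j hj
        · exact hbM j hj
  -- define the Lagrange multipliers and conclude
  set lam : Fin l → ℝ := fun j => w j.succ / w 0 with hlamdef
  have hlammem : lam ∈ multipliers l m := by
    intro j hj
    rw [hlamdef]
    exact div_nonneg_of_nonpos_of_nonpos_real (hb j hj) haneg.le
  have hfinal : ∀ L ∈ 𝓛, Eg 𝒳 g (fun x => φ0 x * L x)
      - ∑ j : Fin l, lam j * (Eg 𝒳 g (fun x => φ j x * L x) - μc j) ≤ p := by
    intro L hL
    have h1 := hF L hL
    have h2 : ∑ j : Fin l, w j.succ * (Eg 𝒳 g (fun x => φ j x * L x) - μc j)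
        = w 0 * ∑ j : Fin l, lam j * (Eg 𝒳 g (fun x => φ j x * L x) - μc j) := by
      rw [Finset.mul_sum]
      apply Finset.sum_congr rfl
      intro j _
      rw [hlamdef]
      have hw0ne : w 0 ≠ 0 := ne_of_lt haneg
      field_simp
    rw [h2] at h1
    by_contra hT
    push_neg at hT
    nlinarith [h1, haneg]
  rw [hvP, valD]
  refine le_trans (iInf₂_le lam hlammem) ?_
  refine sSup_le ?_
  rintro v ⟨L, hL, rfl⟩
  exact EReal.coe_le_coe_iff.2 (hfinal L hL)


end ShapeDRO
end
end

section
/- Perturbation bound for parametric Lagrangian dual values: under assumptions (i)–(iii), inf_{λ ∈ Λ} C̃(λ) is finite and | inf_{λ ∈ Λ} C(λ) − inf_{λ ∈ Λ} C̃(λ) | ≤ sup_{i∈I} |a_i − c_i| + M · sup_{i∈I} |b_i − d_i| ≤ sup_{i∈I} |a_i − c_i| + M · Σ_{j=1}^{l} sup_{i∈I} |b_{ij} − d_{ij}|, where M = max( |λ*|, ( C(λ*) − η_2 + 2 sup_{i∈I} |a_i − c_i| + |λ*| sup_{i∈I} |b_i − d_i| ) / ( η_1 − sup_{i∈I} |b_i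 − d_i| ) ). -/
open Filter Set

noncomputable section

namespace LagrangePerturb

/-- The multiplier set `Λ = ℝ₊^m × ℝ^{l-m}` inside Euclidean `ℝ^l`. -/
def multipliers (l m : ℕ) : Set (EuclideanSpace ℝ (Fin l)) :=
  {lam | ∀ j : Fin l, (j : ℕ) < m → 0 ≤ lam j}

/-- `C(λ) = sup_{i ∈ I} (a_i - λᵀ b_i)`, valued in `(-∞, ∞]` (as `EReal`). -/
def C {l : ℕ} {I : Type*} (a : I → ℝ) (b : I → EuclideanSpace ℝ (Fin l))
    (lam : EuclideanSpace ℝ (Fin l)) : EReal :=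
  ⨆ i : I, ((a i - ∑ j : Fin l, lam j * b i j : ℝ) : EReal)

lemma norm_le_sum_abs {l : ℕ} (x : EuclideanSpace ℝ (Fin l)) : ‖x‖ ≤ ∑ j, |x j| := by
  rw [EuclideanSpace.norm_eq]
  have h : ∀ j ∈ Finset.univ, (0:ℝ) ≤ |x j| := fun j _ => abs_nonneg _
  calc Real.sqrt (∑ i, ‖x i‖ ^ 2) ≤ Real.sqrt ((∑ j, |x j|)^2) := by
        apply Real.sqrt_le_sqrt
        simpa [Real.norm_eq_abs] using Finset.sum_sq_le_sq_sum_of_nonneg h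
    _ = ∑ j, |x j| := Real.sqrt_sq (Finset.sum_nonneg h)

lemma abs_apply_le_norm {l : ℕ} (x : EuclideanSpace ℝ (Fin l)) (j : Fin l) : |x j| ≤ ‖x‖ := by
  rw [EuclideanSpace.norm_eq, ← Real.sqrt_sq_eq_abs]
  apply Real.sqrt_le_sqrt
  simpa [Real.norm_eq_abs, sq_abs] using Finset.single_le_sum (f := fun i => x i ^ 2)
    (fun i _ => sq_nonneg _) (Finset.mem_univ j)

lemma dot_sub_le {l : ℕ} (lam x y : EuclideanSpace ℝ (Fin l)) :
    ∑ j, lam j * x j - ∑ j, lam j * y j ≤ ‖lam‖ * ‖x - y‖ := by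
  have h1 : ∑ j, lam j * x j - ∑ j, lam j * y j = inner ℝ lam (x - y) := by
    simp [PiLp.inner_apply, RCLike.inner_apply, Finset.sum_sub_distrib, mul_sub]
    rw [← Finset.sum_sub_distrib]; exact Finset.sum_congr rfl fun i _ => by ring
  rw [h1]
  exact real_inner_le_norm _ _

/-- **Lemma 2 (perturbation bound for parametric Lagrangian dual values)**. -/
theorem perturbation_bound {l m : ℕ} (hml : m ≤ l)
    {I : Type*} [Nonempty I]
    (a c : I → ℝ) (b d : I → EuclideanSpace ℝ (Fin l))
    -- (i) a finite minimizer λ* of C over Λ: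
    (lamstar : EuclideanSpace ℝ (Fin l)) (hlam : lamstar ∈ multipliers l m)
    (hCfin_top : C a b lamstar ≠ ⊤) (hCfin_bot : C a b lamstar ≠ ⊥)
    (hmin : ∀ lam ∈ multipliers l m, C a b lamstar ≤ C a b lam)
    -- (ii) indices realizing all sign patterns on the equality coordinates:
    (δ : ℝ) (hδ : 0 < δ) (idx : (Fin l → Bool) → I)
    (hidx : ∀ σ : Fin l → Bool,
      (∀ k : Fin l, (k : ℕ) < m → b (idx σ) k < 0) ∧
      (∀ k : Fin l, m ≤ (k : ℕ) → b (idx σ) k = (if σ k then δ else -δ)))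
    -- the constants η₁, η₂, and the suprema of the perturbations:
    (η1 η2 supA supB : ℝ)
    (hη1 : η1 = ⨅ σ : Fin l → Bool, ⨅ k : Fin l, |b (idx σ) k|)
    (hη2 : η2 = ⨅ σ : Fin l → Bool, a (idx σ))
    (hsupA : supA = ⨆ i : I, |a i - c i|)
    (hsupB : supB = ⨆ i : I, ‖b i - d i‖)
    -- (iii) the perturbations are finite (bounded), with `sup |b_i - d_i| < η₁`:
    (hbddA : BddAbove (Set.range fun i : I => |a i - c i|))
    (hbddB : BddAbove (Set.range fun i : I => ‖b i - d i‖))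
    (hBlt : supB < η1)
    -- the constant M:
    (M : ℝ)
    (hM : M = max ‖lamstar‖
      (((C a b lamstar).toReal - η2 + 2 * supA + ‖lamstar‖ * supB) / (η1 - supB))) :
    (⨅ lam ∈ multipliers l m, C c d lam) ≠ ⊤ ∧
    (⨅ lam ∈ multipliers l m, C c d lam) ≠ ⊥ ∧
    |(⨅ lam ∈ multipliers l m, C a b lam).toReal
      - (⨅ lam ∈ multipliers l m, C c d lam).toReal| ≤ supA + M * supB ∧
    |(⨅ lam ∈ multipliers l m, C a b lam).toReal
      - (⨅ lam ∈ multipliers l m, C c d lam).toReal|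
      ≤ supA + M * ∑ j : Fin l, ⨆ i : I, |b i j - d i j| := by
  obtain ⟨i0⟩ := ‹Nonempty I›
  have habs_le : ∀ i, |a i - c i| ≤ supA := fun i => hsupA ▸ le_ciSup hbddA i
  have hnorm_le : ∀ i, ‖b i - d i‖ ≤ supB := fun i => hsupB ▸ le_ciSup hbddB i
  have hsupA0 : 0 ≤ supA := le_trans (abs_nonneg _) (habs_le i0)
  have hsupB0 : 0 ≤ supB := le_trans (norm_nonneg _) (hnorm_le i0)
  have hη1B : 0 < η1 - supB := by linarith
  have hM0 : 0 ≤ M := le_trans (norm_nonneg lamstar) (hM ▸ le_max_left _ _)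
  have hMfrac : ((C a b lamstar).toReal - η2 + 2 * supA + ‖lamstar‖ * supB) ≤ (η1 - supB) * M := by
    have h := hM ▸ le_max_right ‖lamstar‖
      (((C a b lamstar).toReal - η2 + 2 * supA + ‖lamstar‖ * supB) / (η1 - supB))
    rw [div_le_iff₀ hη1B] at h
    linarith [h]
  -- lower bounds for η1, η2
  have h_eta1 : ∀ (σ : Fin l → Bool) (k : Fin l), η1 ≤ |b (idx σ) k| := by
    intro σ k
    rw [hη1]
    refine le_trans (ciInf_le (Set.Finite.bddBelow (Set.finite_range _)) σ) ?_
    exact ciInf_le (Set.Finite.bddBelow (Set.finite_range _)) k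
  have h_eta2 : ∀ σ : Fin l → Bool, η2 ≤ a (idx σ) :=
    fun σ => hη2 ▸ ciInf_le (Set.Finite.bddBelow (Set.finite_range _)) σ
  -- pointwise comparison of the two objectives
  have hpt : ∀ (lam : EuclideanSpace ℝ (Fin l)) (i : I),
      |(a i - ∑ j, lam j * b i j) - (c i - ∑ j, lam j * d i j)| ≤ supA + ‖lam‖ * supB := by
    intro lam i
    have h1 : |∑ j, lam j * b i j - ∑ j, lam j * d i j| ≤ ‖lam‖ * ‖b i - d i‖ := by
      rcases abs_cases (∑ j, lam j * b i j - ∑ j, lam j * d i j) with ⟨he, _⟩ | ⟨he, _⟩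
      · rw [he]; exact dot_sub_le lam (b i) (d i)
      · rw [he, neg_sub]
        have := dot_sub_le lam (d i) (b i)
        rwa [norm_sub_rev] at this
    have h2 := habs_le i
    have h3 : ‖lam‖ * ‖b i - d i‖ ≤ ‖lam‖ * supB :=
      mul_le_mul_of_nonneg_left (hnorm_le i) (norm_nonneg _)
    calc |(a i - ∑ j, lam j * b i j) - (c i - ∑ j, lam j * d i j)|
        = |(a i - c i) - (∑ j, lam j * b i j - ∑ j, lam j * d i j)| := by ring_nf
      _ ≤ |a i - c i| + |∑ j, lam j * b i j - ∑ j, lam j * d i j| := abs_sub _ _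
      _ ≤ supA + ‖lam‖ * supB := by linarith
  -- the two sup-comparison inequalities in EReal
  have hCD_le : ∀ lam : EuclideanSpace ℝ (Fin l),
      C c d lam ≤ C a b lam + ((supA + ‖lam‖ * supB : ℝ) : EReal) := by
    intro lam
    refine iSup_le fun i => ?_
    have h := hpt lam i
    have hr : (c i - ∑ j, lam j * d i j) ≤ (a i - ∑ j, lam j * b i j) + (supA + ‖lam‖ * supB) := by
      rcases abs_le.mp h with ⟨h1, _⟩; linarith
    calc ((c i - ∑ j, lam j * d i j : ℝ) : EReal)
        ≤ (((a i - ∑ j, lam j * b i j) + (supA + ‖lam‖ * supB) : ℝ) : EReal) :=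
          EReal.coe_le_coe_iff.mpr hr
      _ = ((a i - ∑ j, lam j * b i j : ℝ) : EReal) + ((supA + ‖lam‖ * supB : ℝ) : EReal) :=
          EReal.coe_add _ _
      _ ≤ C a b lam + ((supA + ‖lam‖ * supB : ℝ) : EReal) :=
          add_le_add_left (le_iSup (fun i => ((a i - ∑ j, lam j * b i j : ℝ) : EReal)) i) _
  have hDC_le : ∀ lam : EuclideanSpace ℝ (Fin l),
      C a b lam ≤ C c d lam + ((supA + ‖lam‖ * supB : ℝ) : EReal) := by
    intro lam
    refine iSup_le fun i => ?_
    have h := hpt lam i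
    have hr : (a i - ∑ j, lam j * b i j) ≤ (c i - ∑ j, lam j * d i j) + (supA + ‖lam‖ * supB) := by
      rcases abs_le.mp h with ⟨_, h2⟩; linarith
    calc ((a i - ∑ j, lam j * b i j : ℝ) : EReal)
        ≤ (((c i - ∑ j, lam j * d i j) + (supA + ‖lam‖ * supB) : ℝ) : EReal) :=
          EReal.coe_le_coe_iff.mpr hr
      _ = ((c i - ∑ j, lam j * d i j : ℝ) : EReal) + ((supA + ‖lam‖ * supB : ℝ) : EReal) :=
          EReal.coe_add _ _
      _ ≤ C c d lam + ((supA + ‖lam‖ * supB : ℝ) : EReal) :=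
          add_le_add_left (le_iSup (fun i => ((c i - ∑ j, lam j * d i j : ℝ) : EReal)) i) _
  -- growth estimate: a good index for each lam
  have hgrow : ∀ lam ∈ multipliers l m, ∃ i : I,
      η2 ≤ a i ∧ ∑ j, lam j * b i j ≤ -(η1 * ‖lam‖) := by
    intro lam hl
    set σ : Fin l → Bool := fun k => decide (lam k < 0) with hσ
    refine ⟨idx σ, h_eta2 σ, ?_⟩
    have hcoord : ∀ k : Fin l, lam k * b (idx σ) k ≤ -(η1 * |lam k|) := by
      intro k
      have he1 := h_eta1 σ k
      by_cases hk : (k : ℕ) < m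
      · have hb := (hidx σ).1 k hk
        have hlk : 0 ≤ lam k := hl k hk
        have : η1 ≤ -(b (idx σ) k) := by rwa [abs_of_neg hb] at he1
        rw [abs_of_nonneg hlk]
        nlinarith
      · have hb := (hidx σ).2 k (le_of_not_gt hk)
        by_cases hneg : lam k < 0
        · have : σ k = true := by simp [hσ, hneg]
          rw [this, if_pos rfl] at hb
          have hδη : η1 ≤ δ := by rw [hb] at he1; rwa [abs_of_pos hδ] at he1
          rw [hb, abs_of_neg hneg]
          nlinarith
        · have hlk : 0 ≤ lam k := le_of_not_gt hneg
          have : σ k = false := by simp [hσ, hlk, not_lt.mpr hlk]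
          rw [this, if_neg (by simp)] at hb
          have hδη : η1 ≤ δ := by rw [hb] at he1; rwa [abs_neg, abs_of_pos hδ] at he1
          rw [hb, abs_of_nonneg hlk]
          nlinarith
    have hsum : ∑ j, lam j * b (idx σ) j ≤ -(η1 * ∑ j, |lam j|) := by
      rw [Finset.mul_sum, ← Finset.sum_neg_distrib]
      exact Finset.sum_le_sum fun j _ => hcoord j
    have hη10 : 0 ≤ η1 := by linarith
    have := norm_le_sum_abs lam
    nlinarith [this]
  -- lower bound on C c d
  have hCtilde_lb : ∀ lam ∈ multipliers l m,
      ((η2 - supA + (η1 - supB) * ‖lam‖ : ℝ) : EReal) ≤ C c d lam := by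
    intro lam hl
    obtain ⟨i, hi1, hi2⟩ := hgrow lam hl
    have h1 : ∑ j, lam j * d i j - ∑ j, lam j * b i j ≤ ‖lam‖ * ‖b i - d i‖ := by
      have := dot_sub_le lam (d i) (b i)
      rwa [norm_sub_rev] at this
    have h2 : a i - c i ≤ supA := le_trans (le_abs_self _) (habs_le i)
    have h3 : ‖lam‖ * ‖b i - d i‖ ≤ ‖lam‖ * supB :=
      mul_le_mul_of_nonneg_left (hnorm_le i) (norm_nonneg _)
    have hr : η2 - supA + (η1 - supB) * ‖lam‖ ≤ c i - ∑ j, lam j * d i j := by nlinarith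
    exact le_trans (EReal.coe_le_coe_iff.mpr hr)
      (le_iSup (fun i => ((c i - ∑ j, lam j * d i j : ℝ) : EReal)) i)
  -- identify the first infimum
  have hv : (⨅ lam ∈ multipliers l m, C a b lam) = C a b lamstar :=
    le_antisymm (iInf₂_le lamstar hlam) (le_iInf₂ hmin)
  set V : ℝ := (C a b lamstar).toReal with hV
  have hVcoe : C a b lamstar = (V : EReal) := (EReal.coe_toReal hCfin_top hCfin_bot).symm
  set w := (⨅ lam ∈ multipliers l m, C c d lam) with hwdef
  have hw_ub : w ≤ ((V + (supA + ‖lamstar‖ * supB) : ℝ) : EReal) := by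
    refine le_trans (iInf₂_le lamstar hlam) ?_
    have h := hCD_le lamstar
    rw [hVcoe] at h
    rwa [EReal.coe_add]
  have hw_lb : ((η2 - supA : ℝ) : EReal) ≤ w := by
    refine le_iInf₂ fun lam hl => ?_
    refine le_trans (EReal.coe_le_coe_iff.mpr ?_) (hCtilde_lb lam hl)
    nlinarith [norm_nonneg lam]
  have hw_top : w ≠ ⊤ := (hw_ub.trans_lt (EReal.coe_lt_top _)).ne
  have hw_bot : w ≠ ⊥ := ((EReal.bot_lt_coe _).trans_le hw_lb).ne'
  set W : ℝ := w.toReal with hW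
  have hWcoe : w = (W : EReal) := (EReal.coe_toReal hw_top hw_bot).symm
  have hlamstarM : ‖lamstar‖ ≤ M := hM ▸ le_max_left _ _
  -- upper bound: W ≤ V + supA + M * supB
  have hA : W ≤ V + (supA + M * supB) := by
    rw [hWcoe] at hw_ub
    have := EReal.coe_le_coe_iff.mp hw_ub
    nlinarith
  -- lower bound: V - (supA + M * supB) ≤ W
  have hB : V - (supA + M * supB) ≤ W := by
    have key : ∀ lam ∈ multipliers l m,
        ((V - (supA + M * supB) : ℝ) : EReal) ≤ C c d lam := by
      intro lam hl
      by_cases htop : C c d lam = ⊤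
      · rw [htop]; exact le_top
      · have hbot : C c d lam ≠ ⊥ := ((EReal.bot_lt_coe _).trans_le (hCtilde_lb lam hl)).ne'
        set r : ℝ := (C c d lam).toReal with hr
        have hrcoe : C c d lam = (r : EReal) := (EReal.coe_toReal htop hbot).symm
        rw [hrcoe]
        refine EReal.coe_le_coe_iff.mpr ?_
        by_cases hcase : ‖lam‖ ≤ M
        · have h1 : (V : EReal) ≤ C c d lam + ((supA + ‖lam‖ * supB : ℝ) : EReal) :=
            le_trans (hVcoe ▸ hmin lam hl) (hDC_le lam)
          rw [hrcoe, ← EReal.coe_add] at h1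
          have h2 := EReal.coe_le_coe_iff.mp h1
          nlinarith
        · push_neg at hcase
          have h1 := EReal.coe_le_coe_iff.mp ((hCtilde_lb lam hl).trans_eq hrcoe)
          have h2 : (η1 - supB) * M ≤ (η1 - supB) * ‖lam‖ :=
            mul_le_mul_of_nonneg_left (le_of_lt hcase) (le_of_lt hη1B)
          nlinarith [mul_nonneg hM0 hsupB0, mul_nonneg (norm_nonneg lamstar) hsupB0]
    have h := le_iInf₂ key
    rw [← hwdef, hWcoe] at h
    exact EReal.coe_le_coe_iff.mp h
  have hfirst : |(⨅ lam ∈ multipliers l m, C a b lam).toReal - W| ≤ supA + M * supB := by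
    rw [hv, ← hV]
    rw [abs_le]
    constructor <;> linarith
  refine ⟨hw_top, hw_bot, hfirst, ?_⟩
  -- the coordinatewise sum bound
  have hbddj : ∀ j : Fin l, BddAbove (Set.range fun i : I => |b i j - d i j|) := by
    intro j
    obtain ⟨K, hK⟩ := hbddB
    refine ⟨K, fun x hx => ?_⟩
    obtain ⟨i, rfl⟩ := hx
    have h1 : |b i j - d i j| ≤ ‖b i - d i‖ := by
      have := abs_apply_le_norm (b i - d i) j
      simpa using this
    exact h1.trans (hK ⟨i, rfl⟩)
  have hsum_ge : supB ≤ ∑ j : Fin l, ⨆ i : I, |b i j - d i j| := by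
    rw [hsupB]
    refine ciSup_le fun i => ?_
    refine le_trans (norm_le_sum_abs (b i - d i)) ?_
    refine Finset.sum_le_sum fun j _ => ?_
    have h1 : |(b i - d i) j| = |b i j - d i j| := by simp
    rw [h1]
    exact le_ciSup (hbddj j) i
  refine hfirst.trans ?_
  have : M * supB ≤ M * ∑ j : Fin l, ⨆ i : I, |b i j - d i j| :=
    mul_le_mul_of_nonneg_left hsum_ge hM0
  linarith

end LagrangePerturb
end
end

section
/- Monotonicity in dimension of the expected number of non-redundant constraints: for all d ≥ 2 and all n, (1/2) E[N_2(n, d−1)] ≤ E[N_2(n, d)] ≤ n(n−1)/2^d, where N_2(n, d−1) is the analogous count for i.i.d. samples from any product of d−1 atomless probability distributions on ℝ^{d−1}. Equivalently, with S(n,d) := n(n−1) Σ_{k=0}^{n−2} binom(n−2,k)(−1)^k/((k+1)^d(k+2)^d), one has S(n,d−1)/2 ≤ S(n,d) ≤ n(n−1)/2^d for all d ≥ 2. -/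
open MeasureTheory Filter Set ProbabilityTheory
open scoped ENNReal

set_option linter.unusedSectionVars false
set_option linter.unusedVariables false

noncomputable section

namespace OrthoConstraints

/-- The number of non-redundant orthounimodality constraints generated by the
points `Y 1, …, Y n`. -/
def N2count {d : ℕ} {n : ℕ} (Y : Fin n → (Fin d → ℝ)) : ℕ :=
  Set.ncard {p : Fin n × Fin n | p.1 ≠ p.2 ∧ (∀ c, Y p.2 c ≤ Y p.1 c) ∧
    ¬ ∃ k : Fin n, k ≠ p.1 ∧ k ≠ p.2 ∧
      (∀ c, Y k c ≤ Y p.1 c) ∧ (∀ c, Y p.2 c ≤ Y k c)}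


/-- Uniform measure on `(0,1)`. -/
def unif : Measure ℝ := volume.restrict (Ioo (0:ℝ) 1)

instance : IsProbabilityMeasure unif :=
  ⟨by rw [unif, Measure.restrict_apply_univ, Real.volume_Ioo]; norm_num⟩

lemma unif_atomless (x : ℝ) : unif {x} = 0 := by
  rw [unif, Measure.restrict_apply (measurableSet_singleton x)]
  exact measure_mono_null inter_subset_left Real.volume_singleton

variable (ν : Measure ℝ)

def Qset (u : ℝ) : Set ℝ := {x | u ≤ cdf ν x}

lemma bddBelow_Qset {u : ℝ} (hu : 0 < u) : BddBelow (Qset ν u) := by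
  obtain ⟨x₀, hx₀⟩ := eventually_atBot.1 ((tendsto_cdf_atBot ν).eventually_lt_const hu)
  refine ⟨x₀, fun y hy => ?_⟩
  by_contra hlt
  exact absurd hy (by simpa [Qset] using (hx₀ y (le_of_not_ge hlt)).not_ge)

lemma nonempty_Qset {u : ℝ} (hu : u < 1) : (Qset ν u).Nonempty := by
  obtain ⟨x₀, hx₀⟩ := eventually_atTop.1 ((tendsto_cdf_atTop ν).eventually_const_le hu)
  exact ⟨x₀, hx₀ x₀ le_rfl⟩

variable [IsProbabilityMeasure ν]

lemma cdf_sInf_Qset {u : ℝ} (hu0 : 0 < u) (hu1 : u < 1) : u ≤ cdf ν (sInf (Qset ν u)) := by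
  set c := sInf (Qset ν u) with hc
  have htd : Tendsto (cdf ν) (nhdsWithin c (Ioi c)) (nhds (cdf ν c)) :=
    ((cdf ν).right_continuous c).tendsto.mono_left (nhdsWithin_mono _ Ioi_subset_Ici_self)
  refine ge_of_tendsto htd (eventually_mem_nhdsWithin.mono fun x hx => ?_)
  obtain ⟨y, hy, hyx⟩ := (csInf_lt_iff (bddBelow_Qset ν hu0) (nonempty_Qset ν hu1)).1 hx
  exact le_trans hy (monotone_cdf ν hyx.le)

/-- Quantile function. -/
def Q (u : ℝ) : ℝ := if 0 < u ∧ u < 1 then sInf (Qset ν u) else 0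

lemma Q_le_iff {u : ℝ} (hu0 : 0 < u) (hu1 : u < 1) (x : ℝ) :
    Q ν u ≤ x ↔ u ≤ cdf ν x := by
  rw [Q, if_pos ⟨hu0, hu1⟩]
  constructor
  · intro h
    exact le_trans (cdf_sInf_Qset ν hu0 hu1) (monotone_cdf ν h)
  · intro h
    exact csInf_le (bddBelow_Qset ν hu0) h

lemma Q_preimage_Iic (x : ℝ) :
    Q ν ⁻¹' Iic x = (Ioo 0 1 ∩ Iic (cdf ν x)) ∪ ((Ioo (0:ℝ) 1)ᶜ ∩ {u : ℝ | (0:ℝ) ≤ x}) := by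
  ext u
  by_cases h : 0 < u ∧ u < 1
  · simp only [mem_preimage, mem_Iic, mem_union, mem_inter_iff, mem_Ioo, mem_compl_iff,
      mem_setOf_eq]
    rw [Q_le_iff ν h.1 h.2]
    constructor
    · intro hcdf; exact Or.inl ⟨h, hcdf⟩
    · rintro (⟨-, hcdf⟩ | ⟨habs, -⟩)
      · exact hcdf
      · exact absurd h habs
  · simp only [mem_preimage, mem_Iic, Q, if_neg h, mem_union, mem_inter_iff, mem_Ioo,
      mem_compl_iff, mem_setOf_eq]
    constructor
    · intro h0; exact Or.inr ⟨h, h0⟩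
    · rintro (⟨habs, -⟩ | ⟨-, h0⟩)
      · exact absurd habs h
      · exact h0

lemma measurable_Q : Measurable (Q ν) := by
  apply measurable_of_Iic
  intro x
  rw [Q_preimage_Iic]
  exact (measurableSet_Ioo.inter measurableSet_Iic).union
    (measurableSet_Ioo.compl.inter (MeasurableSet.const _))

lemma map_Q : Measure.map (Q ν) unif = ν := by
  haveI : IsProbabilityMeasure (Measure.map (Q ν) unif) :=
    Measure.isProbabilityMeasure_map (measurable_Q ν).aemeasurable
  apply Measure.ext_of_Iic
  intro x
  rw [Measure.map_apply (measurable_Q ν) measurableSet_Iic, ← ofReal_cdf ν x]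
  have hmeas : MeasurableSet (Q ν ⁻¹' Iic x) := (measurable_Q ν) measurableSet_Iic
  rw [unif, Measure.restrict_apply hmeas, Q_preimage_Iic, union_inter_distrib_right]
  have h2 : ((Ioo (0:ℝ) 1)ᶜ ∩ {u : ℝ | (0:ℝ) ≤ x}) ∩ Ioo 0 1 = ∅ := by
    ext u; simp only [mem_inter_iff, mem_compl_iff, mem_empty_iff_false, iff_false]
    tauto
  have h1 : (Ioo 0 1 ∩ Iic (cdf ν x)) ∩ Ioo 0 1 = Ioo 0 1 ∩ Iic (cdf ν x) := by
    rw [inter_comm (Ioo 0 1) (Iic (cdf ν x)), inter_assoc]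
    simp
  rw [h2, union_empty, h1]
  have hc0 : 0 ≤ cdf ν x := cdf_nonneg ν x
  have hc1 : cdf ν x ≤ 1 := cdf_le_one ν x
  rcases lt_or_ge (cdf ν x) 1 with hlt | hge
  · have : Ioo (0:ℝ) 1 ∩ Iic (cdf ν x) = Ioc 0 (cdf ν x) := by
      ext u
      simp only [mem_inter_iff, mem_Ioo, mem_Iic, mem_Ioc]
      constructor
      · rintro ⟨⟨h0, -⟩, hle⟩; exact ⟨h0, hle⟩
      · rintro ⟨h0, hle⟩; exact ⟨⟨h0, lt_of_le_of_lt hle hlt⟩, hle⟩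
    rw [this, Real.volume_Ioc]
    norm_num
  · have hceq : cdf ν x = 1 := le_antisymm hc1 hge
    have : Ioo (0:ℝ) 1 ∩ Iic (cdf ν x) = Ioo 0 1 := by
      rw [hceq]
      ext u
      simp only [mem_inter_iff, mem_Ioo, mem_Iic]
      exact ⟨fun h => h.1, fun h => ⟨h, h.2.le⟩⟩
    rw [this, Real.volume_Ioo, hceq]
    norm_num

lemma Q_mono {u v : ℝ} (hu0 : 0 < u) (huv : u ≤ v) (hv1 : v < 1) : Q ν u ≤ Q ν v := by
  rw [Q, Q, if_pos ⟨hu0, lt_of_le_of_lt huv hv1⟩, if_pos ⟨lt_of_lt_of_le hu0 huv, hv1⟩]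
  exact csInf_le_csInf (bddBelow_Qset ν hu0) (nonempty_Qset ν hv1)
    (fun x hx => le_trans huv hx)

lemma Q_strictMono (hν : ∀ x, ν {x} = 0) {u v : ℝ} (hu0 : 0 < u) (huv : u < v) (hv1 : v < 1) :
    Q ν u < Q ν v := by
  rcases lt_or_eq_of_le (Q_mono ν hu0 huv.le hv1) with h | h
  · exact h
  exfalso
  set c := Q ν v with hc
  have hv_le : v ≤ cdf ν c := by
    rw [hc, Q, if_pos ⟨lt_trans hu0 huv, hv1⟩]
    exact cdf_sInf_Qset ν (lt_trans hu0 huv) hv1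
  have hlt_u : ∀ y, y < c → cdf ν y < u := by
    intro y hy
    by_contra hcon
    have hyQ : y ∈ Qset ν u := le_of_not_gt hcon
    have : Q ν u ≤ y := by
      rw [Q, if_pos ⟨hu0, lt_trans huv hv1⟩]
      exact csInf_le (bddBelow_Qset ν hu0) hyQ
    rw [← h] at hy
    exact absurd this (not_le.2 hy)
  -- ν (Iio c) ≤ ofReal u
  have hIio : ν (Iio c) ≤ ENNReal.ofReal u := by
    have hcover : Iio c = ⋃ q : {q : ℚ // (q:ℝ) < c}, Iic (q.1 : ℝ) := by
      ext z
      simp only [mem_Iio, mem_iUnion, mem_Iic]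
      constructor
      · intro hz
        obtain ⟨q, hq1, hq2⟩ := exists_rat_btwn hz
        exact ⟨⟨q, hq2⟩, hq1.le⟩
      · rintro ⟨⟨q, hq⟩, hzq⟩
        exact lt_of_le_of_lt hzq hq
    rw [hcover]
    have hdir : Directed (· ⊆ ·) (fun q : {q : ℚ // (q:ℝ) < c} => Iic (q.1 : ℝ)) := by
      intro a b
      rcases le_total (a.1 : ℝ) (b.1 : ℝ) with hab | hab
      · exact ⟨b, Iic_subset_Iic.2 hab, Iic_subset_Iic.2 le_rfl⟩
      · exact ⟨a, Iic_subset_Iic.2 le_rfl, Iic_subset_Iic.2 hab⟩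
    rcases isEmpty_or_nonempty {q : ℚ // (q:ℝ) < c} with hemp | hne
    · rw [iUnion_of_empty]
      simp
    rw [hdir.measure_iUnion]
    · apply iSup_le
      intro q
      rw [← ofReal_cdf ν]
      exact ENNReal.ofReal_le_ofReal (hlt_u _ q.2).le
  have hIic : ENNReal.ofReal v ≤ ν (Iic c) := by
    rw [← ofReal_cdf ν c]
    exact ENNReal.ofReal_le_ofReal hv_le
  have hsplit : ν (Iic c) = ν (Iio c) + ν {c} := by
    rw [← Iio_union_right, measure_union _ (measurableSet_singleton c)]
    simp [Set.disjoint_singleton_right]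
  rw [hν c, add_zero] at hsplit
  have : ENNReal.ofReal v ≤ ENNReal.ofReal u := le_trans hIic (hsplit ▸ hIio)
  rw [ENNReal.ofReal_le_ofReal_iff hu0.le] at this
  exact absurd this (not_le.2 huv)

lemma Q_le_Q_iff (hν : ∀ x, ν {x} = 0) {u v : ℝ} (hu : u ∈ Ioo (0:ℝ) 1) (hv : v ∈ Ioo (0:ℝ) 1) :
    Q ν u ≤ Q ν v ↔ u ≤ v := by
  constructor
  · intro h
    by_contra hcon
    exact absurd h (not_le.2 (Q_strictMono ν hν hv.1 (lt_of_not_ge hcon) hu.2))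
  · intro h
    exact Q_mono ν hu.1 h hv.2



section Tools

/-- T1: pushforward of a product measure under precomposition with an injection. -/
lemma map_comp_pi {J I : Type*} [Fintype J] [Fintype I] [DecidableEq I]
    (μ : I → Measure ℝ) [∀ i, IsProbabilityMeasure (μ i)]
    (f : J → I) (hf : Function.Injective f) :
    Measure.map (fun w : I → ℝ => w ∘ f) (Measure.pi μ) = Measure.pi (fun j => μ (f j)) := by
  have hmeas : Measurable (fun w : I → ℝ => w ∘ f) :=
    measurable_pi_lambda _ (fun j => measurable_pi_apply (f j))
  refine (Measure.pi_eq fun s hs => ?_).symm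
  rw [Measure.map_apply hmeas (MeasurableSet.univ_pi hs)]
  have hpre : (fun w : I → ℝ => w ∘ f) ⁻¹' (univ.pi s) =
      univ.pi (fun i => ⋂ (j : J) (_ : f j = i), s j) := by
    ext w
    rw [mem_preimage, Set.mem_univ_pi, Set.mem_univ_pi]
    constructor
    · intro h i
      rw [mem_iInter]
      intro j
      rw [mem_iInter]
      rintro rfl
      exact h j
    · intro h j
      have := h (f j)
      rw [mem_iInter] at this
      have := this j
      rw [mem_iInter] at this
      exact this rfl
  rw [hpre, Measure.pi_pi]
  classical
  have hsplit : (Finset.univ : Finset I) = Finset.univ.filter (fun i => i ∈ Set.range f) ∪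
      Finset.univ.filter (fun i => i ∉ Set.range f) := by
    rw [Finset.filter_union_filter_not_eq]
  rw [hsplit, Finset.prod_union (Finset.disjoint_filter_filter_not _ _ _)]
  have h2 : ∏ i ∈ Finset.univ.filter (fun i => i ∉ Set.range f),
      (μ i) (⋂ (j : J) (_ : f j = i), s j) = 1 := by
    apply Finset.prod_eq_one
    intro i hi
    simp only [Finset.mem_filter, Set.mem_range] at hi
    have : (⋂ (j : J) (_ : f j = i), s j) = univ := by
      apply eq_univ_iff_forall.2
      intro x
      simp only [mem_iInter]
      intro j hj
      exact absurd ⟨j, hj⟩ hi.2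
    rw [this]
    exact measure_univ
  have h1 : Finset.univ.filter (fun i => i ∈ Set.range f) = Finset.univ.image f := by
    ext i
    simp [Set.mem_range]
  rw [h2, mul_one, h1, Finset.prod_image (fun a _ b _ h => hf h)]
  refine Finset.prod_congr rfl fun j _ => ?_
  congr 1
  apply Subset.antisymm
  · exact iInter_subset_of_subset j (by simp)
  · apply subset_iInter; intro j'
    apply subset_iInter; intro hj'
    rw [hf hj']

/-- curry as a measurable equivalence. -/
def curryEquiv (ι κ : Type*) :
    (ι × κ → ℝ) ≃ᵐ (ι → κ → ℝ) where
  toFun w a b := w (a, b)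
  invFun x q := x q.1 q.2
  left_inv w := rfl
  right_inv x := rfl
  measurable_toFun := by
    apply measurable_pi_lambda
    intro a
    apply measurable_pi_lambda
    intro b
    exact measurable_pi_apply _
  measurable_invFun := by
    apply measurable_pi_lambda
    intro q
    exact (measurable_pi_apply q.2).comp (measurable_pi_apply q.1)


/-- T2: uncurry direction. -/
lemma map_uncurry {ι κ : Type*} [Fintype ι] [Fintype κ] (μ : ι × κ → Measure ℝ)
    [∀ q, IsProbabilityMeasure (μ q)] :
    Measure.map (curryEquiv ι κ).symm
      (Measure.pi (fun a => Measure.pi (fun b => μ (a, b)))) = Measure.pi μ := by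
  refine (Measure.pi_eq fun s hs => ?_).symm
  rw [Measure.map_apply (curryEquiv ι κ).symm.measurable (MeasurableSet.univ_pi hs)]
  have hpre : (curryEquiv ι κ).symm ⁻¹' (univ.pi s) =
      univ.pi (fun a => univ.pi (fun b => s (a, b))) := by
    ext x
    rw [mem_preimage, Set.mem_univ_pi, Set.mem_univ_pi]
    constructor
    · intro h a
      rw [Set.mem_univ_pi]
      intro b
      exact h (a, b)
    · intro h q
      have := h q.1
      rw [Set.mem_univ_pi] at this
      exact this q.2
  rw [hpre, Measure.pi_pi]
  have : ∀ a, Measure.pi (fun b => μ (a, b)) (univ.pi (fun b => s (a, b)))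
      = ∏ b, μ (a, b) (s (a, b)) := fun a => Measure.pi_pi _ _
  simp_rw [this]
  exact (Fintype.prod_prod_type (f := fun q => (μ q : Measure ℝ) (s q))).symm

/-- T2': curry direction. -/
lemma map_curry {ι κ : Type*} [Fintype ι] [Fintype κ] (μ : ι × κ → Measure ℝ)
    [∀ q, IsProbabilityMeasure (μ q)] :
    Measure.map (curryEquiv ι κ) (Measure.pi μ)
      = Measure.pi (fun a => Measure.pi (fun b => μ (a, b))) := by
  rw [← map_uncurry μ, Measure.map_map (curryEquiv ι κ).measurable
    (curryEquiv ι κ).symm.measurable, MeasurableEquiv.self_comp_symm, Measure.map_id]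

/-- T4: pair evaluation pushforward. -/
lemma map_pair {J : Type*} [Fintype J] [DecidableEq J] (μ : J → Measure ℝ)
    [∀ j, IsProbabilityMeasure (μ j)] {a b : J} (hab : a ≠ b) :
    Measure.map (fun v : J → ℝ => (v a, v b)) (Measure.pi μ) = (μ a).prod (μ b) := by
  have hfinj : Function.Injective (![a, b]) := by
    intro i j hij
    fin_cases i <;> fin_cases j <;> simp_all
  have h1 : (fun v : J → ℝ => (v a, v b)) =
      (fun u : Fin 2 → ℝ => (u 0, u 1)) ∘ (fun v : J → ℝ => v ∘ ![a, b]) := by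
    funext v
    simp
  have hm1 : Measurable (fun v : J → ℝ => v ∘ ![a, b]) :=
    measurable_pi_lambda _ (fun j => measurable_pi_apply _)
  have hm2 : Measurable (fun u : Fin 2 → ℝ => (u 0, u 1)) :=
    (measurable_pi_apply _).prodMk (measurable_pi_apply _)
  rw [h1, ← Measure.map_map hm2 hm1, map_comp_pi μ _ hfinj]
  have h2 : (fun j : Fin 2 => μ (![a, b] j)) = ![μ a, μ b] := by
    funext j
    fin_cases j <;> simp
  rw [h2]
  have h3 : (fun u : Fin 2 → ℝ => (u 0, u 1)) = ⇑(MeasurableEquiv.finTwoArrow (α := ℝ)) := rfl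
  rw [h3]
  exact (measurePreserving_finTwoArrow_vec (μ a) (μ b)).map_eq

/-- key one-dimensional fact: P(Y ≤ X) = 1/2 for iid atomless. -/
lemma prod_half (ν : Measure ℝ) [IsProbabilityMeasure ν] (hν : ∀ x, ν {x} = 0) :
    (ν.prod ν) {p : ℝ × ℝ | p.2 ≤ p.1} = 1/2 := by
  have hA : MeasurableSet {p : ℝ × ℝ | p.2 ≤ p.1} := measurableSet_le measurable_snd measurable_fst
  have hB : MeasurableSet {p : ℝ × ℝ | p.1 ≤ p.2} := measurableSet_le measurable_fst measurable_snd
  have hswap : (ν.prod ν) {p : ℝ × ℝ | p.1 ≤ p.2} = (ν.prod ν) {p : ℝ × ℝ | p.2 ≤ p.1} := by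
    conv_lhs => rw [← Measure.prod_swap]
    rw [Measure.map_apply measurable_swap hB]
    congr 1
  have hdiagmeas : MeasurableSet {p : ℝ × ℝ | p.1 = p.2} :=
    measurableSet_eq_fun measurable_fst measurable_snd
  have hdiag : (ν.prod ν) ({p : ℝ × ℝ | p.2 ≤ p.1} ∩ {p : ℝ × ℝ | p.1 ≤ p.2}) = 0 := by
    have hsub : ({p : ℝ × ℝ | p.2 ≤ p.1} ∩ {p : ℝ × ℝ | p.1 ≤ p.2}) = {p : ℝ × ℝ | p.1 = p.2} := by
      ext p
      simp only [mem_inter_iff, mem_setOf_eq]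
      constructor
      · rintro ⟨h1, h2⟩; exact le_antisymm h2 h1
      · intro h; exact ⟨h.ge, h.le⟩
    rw [hsub, Measure.prod_apply hdiagmeas]
    have hfib : ∀ x : ℝ, (Prod.mk x ⁻¹' {p : ℝ × ℝ | p.1 = p.2}) = {x} := by
      intro x
      ext y
      simp only [mem_preimage, mem_setOf_eq, mem_singleton_iff]
      exact eq_comm
    simp only [hfib, hν]
    simp
  have hunion : {p : ℝ × ℝ | p.2 ≤ p.1} ∪ {p : ℝ × ℝ | p.1 ≤ p.2} = univ := by
    ext p
    simp only [mem_union, mem_setOf_eq, mem_univ, iff_true]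
    exact (le_total p.2 p.1)
  have htot := measure_union_add_inter (μ := ν.prod ν) {p : ℝ × ℝ | p.2 ≤ p.1} hB
  rw [hunion, hdiag, add_zero, hswap, measure_univ] at htot
  rw [ENNReal.eq_div_iff (by norm_num) (by norm_num), two_mul]
  exact htot.symm

/-- T5: two-block independence split for product measures. -/
lemma pi_split {I : Type*} [Fintype I] (μ : I → Measure ℝ) [∀ i, IsProbabilityMeasure (μ i)]
    (p : I → Prop) [DecidablePred p]
    {A : Set ({i // p i} → ℝ)} {B : Set ({i // ¬p i} → ℝ)}
    (hA : MeasurableSet A) (hB : MeasurableSet B) :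
    Measure.pi μ ({w : I → ℝ | (fun i : {i // p i} => w i) ∈ A}
        ∩ {w : I → ℝ | (fun i : {i // ¬p i} => w i) ∈ B})
      = Measure.pi (fun i : {i // p i} => μ i) A * Measure.pi (fun i : {i // ¬p i} => μ i) B := by
  set e := MeasurableEquiv.piEquivPiSubtypeProd (fun _ : I => ℝ) p with he
  have hset : {w : I → ℝ | (fun i : {i // p i} => w i) ∈ A}
      ∩ {w : I → ℝ | (fun i : {i // ¬p i} => w i) ∈ B} = e ⁻¹' (A ×ˢ B) := by
    ext w
    simp only [mem_inter_iff, mem_setOf_eq, mem_preimage, Set.mem_prod, he,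
      MeasurableEquiv.piEquivPiSubtypeProd, MeasurableEquiv.coe_mk, Equiv.piEquivPiSubtypeProd]
    rfl
  rw [hset, ← Measure.map_apply e.measurable (hA.prod hB),
    (measurePreserving_piEquivPiSubtypeProd μ p).map_eq, Measure.prod_prod]

/-- marginal of a product measure along a block. -/
lemma pi_marginal {I : Type*} [Fintype I] (μ : I → Measure ℝ) [∀ i, IsProbabilityMeasure (μ i)]
    (p : I → Prop) [DecidablePred p] {A : Set ({i // p i} → ℝ)} (hA : MeasurableSet A) :
    Measure.pi μ {w : I → ℝ | (fun i : {i // p i} => w i) ∈ A}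
      = Measure.pi (fun i : {i // p i} => μ i) A := by
  have := pi_split μ p hA (MeasurableSet.univ (α := {i // ¬p i} → ℝ))
  simpa using this

/-- T3: joint law of independent variables is the product measure (flattened form). -/
lemma map_joint {n d : ℕ} (ν : Fin d → Measure ℝ) [∀ i, IsProbabilityMeasure (ν i)]
    {Ω : Type*} [MeasurableSpace Ω] (P : Measure Ω) [IsProbabilityMeasure P]
    (X : Fin n → Ω → (Fin d → ℝ)) (hX_meas : ∀ i, Measurable (X i))
    (hX_indep : ProbabilityTheory.iIndepFun X P)
    (hX_law : ∀ i, Measure.map (X i) P = Measure.pi ν) :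
    Measure.map (fun ω (q : Fin n × Fin d) => X q.1 ω q.2) P
      = Measure.pi (fun q : Fin n × Fin d => ν q.2) := by
  have hmeas : Measurable (fun ω (q : Fin n × Fin d) => X q.1 ω q.2) :=
    measurable_pi_lambda _ (fun q => (measurable_pi_apply q.2).comp (hX_meas q.1))
  refine (Measure.pi_eq fun s hs => ?_).symm
  rw [Measure.map_apply hmeas (MeasurableSet.univ_pi hs)]
  have hpre : (fun ω (q : Fin n × Fin d) => X q.1 ω q.2) ⁻¹' univ.pi s
      = ⋂ i, X i ⁻¹' (univ.pi (fun c => s (i, c))) := by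
    ext ω
    rw [mem_preimage, Set.mem_univ_pi]
    simp only [mem_iInter, mem_preimage, Set.mem_univ_pi]
    exact Prod.forall
  rw [hpre, hX_indep.meas_iInter (fun i =>
    ⟨univ.pi (fun c => s (i, c)), MeasurableSet.univ_pi (fun c => hs (i, c)), rfl⟩)]
  have hterm : ∀ i, P (X i ⁻¹' (univ.pi fun c => s (i, c))) = ∏ c, ν c (s (i, c)) := by
    intro i
    rw [← Measure.map_apply (hX_meas i) (MeasurableSet.univ_pi (fun c => hs (i, c))),
      hX_law i, Measure.pi_pi]
  simp_rw [hterm]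
  exact (Fintype.prod_prod_type (f := fun q => (ν q.2 : Measure ℝ) (s q))).symm

end Tools



/-- The closed-form expression
`S(n,d) = n(n-1) ∑_{k=0}^{n-2} C(n-2,k)(-1)^k/((k+1)^d (k+2)^d)` for the
expected number of non-redundant constraints. -/
def S (n d : ℕ) : ℝ :=
  n * ((n : ℝ) - 1) * ∑ k ∈ Finset.range (n - 1),
    ((n - 2).choose k : ℝ) * (-1) ^ k / ((k + 1) ^ d * (k + 2) ^ d)

/-- auxiliary polynomial -/
def A (N e : ℕ) (x : ℝ) : ℝ :=
  ∑ k ∈ Finset.range (N + 1),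
    (N.choose k : ℝ) * (-1) ^ k * (((k : ℝ) + 1)⁻¹ * ((k : ℝ) + 2)⁻¹) ^ e * x ^ k

lemma A_zero (N : ℕ) (x : ℝ) : A N 0 x = (1 - x) ^ N := by
  rw [A, show (1:ℝ) - x = -x + 1 by ring, add_pow]
  refine Finset.sum_congr rfl fun k hk => ?_
  rw [one_pow, mul_one, pow_zero, mul_one, neg_pow]
  ring

lemma integral_one_sub : (∫ t in (0:ℝ)..1, (1 - t)) = 1/2 := by
  rw [intervalIntegral.integral_sub intervalIntegrable_const
    intervalIntegral.intervalIntegrable_id, integral_id,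
    intervalIntegral.integral_const]
  norm_num

lemma A_succ (N e : ℕ) (x : ℝ) :
    A N (e + 1) x = ∫ t in (0:ℝ)..1, (1 - t) * A N e (x * t) := by
  rw [A]
  have hrepr : ∀ t : ℝ, (1 - t) * A N e (x * t) = ∑ k ∈ Finset.range (N + 1),
      (N.choose k : ℝ) * (-1) ^ k * (((k : ℝ) + 1)⁻¹ * ((k : ℝ) + 2)⁻¹) ^ e * x ^ k *
        (t ^ k - t ^ (k+1)) := by
    intro t
    rw [A, Finset.mul_sum]
    refine Finset.sum_congr rfl fun k hk => ?_
    rw [mul_pow x t]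
    ring
  simp_rw [hrepr]
  rw [intervalIntegral.integral_finset_sum]
  · refine Finset.sum_congr rfl fun k hk => ?_
    have key : (∫ t in (0:ℝ)..1, (t ^ k - t ^ (k+1))) = ((k:ℝ) + 1)⁻¹ * ((k:ℝ) + 2)⁻¹ := by
      rw [intervalIntegral.integral_sub (intervalIntegral.intervalIntegrable_pow k)
        (intervalIntegral.intervalIntegrable_pow (k+1)), integral_pow, integral_pow]
      have h1 : ((k:ℝ) + 1) ≠ 0 := by positivity
      have h2 : ((k:ℝ) + 2) ≠ 0 := by positivity
      push_cast
      rw [one_pow, one_pow, zero_pow (Nat.succ_ne_zero k), zero_pow (Nat.succ_ne_zero (k+1))]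
      field_simp
      ring_nf
    rw [intervalIntegral.integral_const_mul, key, pow_succ]
    ring
  · intro k hk
    apply Continuous.intervalIntegrable
    continuity

lemma A_nonneg (N e : ℕ) {x : ℝ} (h0 : 0 ≤ x) (h1 : x ≤ 1) : 0 ≤ A N e x := by
  induction e generalizing x with
  | zero => rw [A_zero]; exact pow_nonneg (by linarith) N
  | succ e ih =>
    rw [A_succ]
    apply intervalIntegral.integral_nonneg zero_le_one
    intro t ht
    obtain ⟨ht0, ht1⟩ := ht
    have hxt0 : 0 ≤ x * t := mul_nonneg h0 ht0
    have hxt1 : x * t ≤ 1 := by nlinarith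
    exact mul_nonneg (by linarith) (ih hxt0 hxt1)

lemma A_cont (N e : ℕ) : Continuous (A N e) := by
  unfold A
  exact continuous_finset_sum _ fun k _ => by continuity

lemma A_intable (N e : ℕ) (x : ℝ) :
    IntervalIntegrable (fun t => (1 - t) * A N e (x * t)) volume 0 1 :=
  ((continuous_const.sub continuous_id).mul
    ((A_cont N e).comp (continuous_const.mul continuous_id))).intervalIntegrable 0 1

lemma A_anti (N e : ℕ) {x y : ℝ} (h0 : 0 ≤ x) (hxy : x ≤ y) (h1 : y ≤ 1) :
    A N e y ≤ A N e x := by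
  induction e generalizing x y with
  | zero =>
    rw [A_zero, A_zero]
    exact pow_le_pow_left₀ (by linarith) (by linarith) N
  | succ e ih =>
    rw [A_succ, A_succ]
    apply intervalIntegral.integral_mono_on zero_le_one (A_intable N e y) (A_intable N e x)
    intro t ht
    obtain ⟨ht0, ht1⟩ := ht
    have : A N e (y * t) ≤ A N e (x * t) :=
      ih (mul_nonneg h0 ht0) (mul_le_mul_of_nonneg_right hxy ht0) (by nlinarith)
    have h1t : 0 ≤ 1 - t := by linarith
    nlinarith

lemma A_apply_zero (N e : ℕ) : A N e 0 = (2:ℝ)⁻¹ ^ e := by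
  rw [A, Finset.sum_eq_single 0]
  · norm_num
  · intro k hk hk0
    rw [zero_pow hk0, mul_zero]
  · intro h; exact absurd (Finset.mem_range.2 (Nat.succ_pos N)) h

lemma A_one_le (N e : ℕ) : A N e 1 ≤ (2:ℝ)⁻¹ ^ e := by
  induction e with
  | zero =>
    rw [A_zero]
    norm_num
    exact pow_le_one₀ (by norm_num) (by norm_num)
  | succ e ih =>
    rw [A_succ]
    calc ∫ t in (0:ℝ)..1, (1 - t) * A N e (1 * t)
        ≤ ∫ t in (0:ℝ)..1, (1 - t) * (2:ℝ)⁻¹ ^ e := by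
          have cInt : IntervalIntegrable (fun t : ℝ => (1 - t) * (2:ℝ)⁻¹ ^ e) volume 0 1 := by
            apply Continuous.intervalIntegrable; continuity
          apply intervalIntegral.integral_mono_on zero_le_one (A_intable N e 1) cInt
          intro t ht
          obtain ⟨ht0, ht1⟩ := ht
          have h2 : A N e (1 * t) ≤ A N e 0 := by
            apply A_anti N e le_rfl _ (by nlinarith)
            nlinarith
          rw [A_apply_zero] at h2
          nlinarith
      _ = (2:ℝ)⁻¹ ^ (e + 1) := by
          rw [intervalIntegral.integral_mul_const, integral_one_sub, pow_succ]
          ring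

lemma A_half_le (N e : ℕ) : A N e 1 / 2 ≤ A N (e + 1) 1 := by
  rw [A_succ]
  calc A N e 1 / 2 = ∫ t in (0:ℝ)..1, (1 - t) * A N e 1 := by
        rw [intervalIntegral.integral_mul_const, integral_one_sub]
        ring
    _ ≤ ∫ t in (0:ℝ)..1, (1 - t) * A N e (1 * t) := by
        have cInt : IntervalIntegrable (fun t : ℝ => (1 - t) * A N e 1) volume 0 1 := by
          apply Continuous.intervalIntegrable; continuity
        apply intervalIntegral.integral_mono_on zero_le_one cInt (A_intable N e 1)
        intro t ht
        obtain ⟨ht0, ht1⟩ := ht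
        have : A N e 1 ≤ A N e (1 * t) := by
          apply A_anti N e (by nlinarith) (by nlinarith) le_rfl
        nlinarith

lemma S_eq (n : ℕ) (hn : 2 ≤ n) (e : ℕ) : S n e = n * ((n:ℝ) - 1) * A (n - 2) e 1 := by
  rw [S, A]
  have h : n - 1 = (n - 2) + 1 := by omega
  rw [h]
  congr 1
  refine Finset.sum_congr rfl fun k hk => ?_
  have h1 : ((k:ℝ) + 1) ≠ 0 := by positivity
  have h2 : ((k:ℝ) + 2) ≠ 0 := by positivity
  rw [one_pow, mul_one, mul_pow, div_eq_mul_inv, mul_inv, ← inv_pow, ← inv_pow]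

lemma S_ineq (n d : ℕ) (hd : 2 ≤ d) :
    S n (d - 1) / 2 ≤ S n d ∧ S n d ≤ n * ((n : ℝ) - 1) / 2 ^ d := by
  rcases lt_or_ge n 2 with hn | hn
  · have hS : ∀ e, S n e = 0 := by
      intro e
      interval_cases n <;> simp [S]
    constructor
    · rw [hS, hS]; norm_num
    · rw [hS]
      apply div_nonneg _ (by positivity)
      interval_cases n <;> norm_num
  · have hfac : (0:ℝ) ≤ n * ((n:ℝ) - 1) := by
      have : (2:ℝ) ≤ (n:ℝ) := by exact_mod_cast hn
      nlinarith
    have hd1 : d - 1 + 1 = d := by omega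
    constructor
    · rw [S_eq n hn, S_eq n hn, ← hd1]
      calc n * ((n:ℝ) - 1) * A (n - 2) (d-1) 1 / 2
          = n * ((n:ℝ) - 1) * (A (n - 2) (d-1) 1 / 2) := by ring
        _ ≤ n * ((n:ℝ) - 1) * A (n - 2) (d - 1 + 1) 1 :=
            mul_le_mul_of_nonneg_left (A_half_le _ _) hfac
    · rw [S_eq n hn]
      calc n * ((n:ℝ) - 1) * A (n - 2) d 1 ≤ n * ((n:ℝ) - 1) * (2:ℝ)⁻¹ ^ d :=
            mul_le_mul_of_nonneg_left (A_one_le _ _) hfac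
        _ = n * ((n:ℝ) - 1) / 2 ^ d := by
            rw [inv_pow]
            ring


section N2

variable {n d : ℕ}

/-- the defining condition of a non-redundant pair -/
def cond (p : Fin n × Fin n) (x : Fin n → Fin d → ℝ) : Prop :=
  p.1 ≠ p.2 ∧ (∀ c, x p.2 c ≤ x p.1 c) ∧
    ¬ ∃ k : Fin n, k ≠ p.1 ∧ k ≠ p.2 ∧
      (∀ c, x k c ≤ x p.1 c) ∧ (∀ c, x p.2 c ≤ x k c)

lemma N2count_eq (Y : Fin n → Fin d → ℝ) : N2count Y = Set.ncard {p | cond p Y} := rfl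

def flatten (w : Fin n × Fin d → ℝ) : Fin n → Fin d → ℝ := fun i c => w (i, c)

def Bev (n d : ℕ) (p : Fin n × Fin n) : Set (Fin n × Fin d → ℝ) := {w | cond p (flatten w)}

lemma measurableSet_dom (a b : Fin n) :
    MeasurableSet {w : Fin n × Fin d → ℝ | ∀ c, w (a, c) ≤ w (b, c)} := by
  have : {w : Fin n × Fin d → ℝ | ∀ c, w (a, c) ≤ w (b, c)}
      = ⋂ c, {w : Fin n × Fin d → ℝ | w (a, c) ≤ w (b, c)} := by
    ext w; simp
  rw [this]
  exact MeasurableSet.iInter fun c =>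
    measurableSet_le (measurable_pi_apply _) (measurable_pi_apply _)

lemma measurableSet_Bev (p : Fin n × Fin n) : MeasurableSet (Bev n d p) := by
  have hBev : Bev n d p = {w : Fin n × Fin d → ℝ | p.1 ≠ p.2}
      ∩ ({w : Fin n × Fin d → ℝ | ∀ c, w (p.2, c) ≤ w (p.1, c)}
      ∩ (⋃ k : Fin n, ⋃ (_ : k ≠ p.1), ⋃ (_ : k ≠ p.2),
          ({w : Fin n × Fin d → ℝ | ∀ c, w (k, c) ≤ w (p.1, c)}
            ∩ {w : Fin n × Fin d → ℝ | ∀ c, w (p.2, c) ≤ w (k, c)}))ᶜ) := by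
    ext w
    simp only [Bev, cond, flatten, mem_inter_iff, mem_setOf_eq, mem_compl_iff, mem_iUnion,
      mem_inter_iff, exists_prop]
    try tauto
  rw [hBev]
  exact (MeasurableSet.const _).inter ((measurableSet_dom _ _).inter
    ((MeasurableSet.iUnion fun k => MeasurableSet.iUnion fun _ => MeasurableSet.iUnion fun _ =>
      (measurableSet_dom _ _).inter (measurableSet_dom _ _)).compl))

lemma N2count_cast (Y : Fin n → Fin d → ℝ) :
    (N2count Y : ℝ) = ∑ p ∈ Finset.univ.offDiag,
      Set.indicator {x : Fin n → Fin d → ℝ | cond p x} (fun _ => (1:ℝ)) Y := by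
  classical
  rw [N2count_eq]
  have hset : {p : Fin n × Fin n | cond p Y}
      = ↑(Finset.univ.offDiag.filter (fun p => cond p Y)) := by
    ext p
    simp only [mem_setOf_eq, Finset.coe_filter, Finset.mem_offDiag, Finset.mem_univ, true_and]
    exact ⟨fun h => ⟨h.1, h⟩, fun h => h.2⟩
  rw [hset, Set.ncard_coe_finset, Finset.card_filter, Nat.cast_sum]
  refine Finset.sum_congr rfl fun p _ => ?_
  by_cases h : cond p Y
  · rw [if_pos h,
      Set.indicator_of_mem (show Y ∈ {x : Fin n → Fin d → ℝ | cond p x} from h) (fun _ => (1:ℝ))]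
    norm_num
  · rw [if_neg h,
      Set.indicator_of_notMem (show Y ∉ {x : Fin n → Fin d → ℝ | cond p x} from h) (fun _ => (1:ℝ))]
    norm_num

lemma N2flat_eq_sum (w : Fin n × Fin d → ℝ) :
    (N2count (flatten w) : ℝ)
      = ∑ p ∈ Finset.univ.offDiag, Set.indicator (Bev n d p) (fun _ => (1:ℝ)) w := by
  rw [N2count_cast]
  rfl

lemma measurable_N2flat :
    Measurable (fun w : Fin n × Fin d → ℝ => (N2count (flatten w) : ℝ)) := by
  have : (fun w : Fin n × Fin d → ℝ => (N2count (flatten w) : ℝ))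
      = fun w => ∑ p ∈ Finset.univ.offDiag, Set.indicator (Bev n d p) (fun _ => (1:ℝ)) w :=
    funext N2flat_eq_sum
  rw [this]
  exact Finset.measurable_sum _ fun p _ => measurable_const.indicator (measurableSet_Bev p)

lemma integral_N2 (ρ : Measure (Fin n × Fin d → ℝ)) [IsProbabilityMeasure ρ] :
    ∫ w, (N2count (flatten w) : ℝ) ∂ρ
      = ∑ p ∈ Finset.univ.offDiag, (ρ (Bev n d p)).toReal := by
  simp_rw [N2flat_eq_sum]
  rw [integral_finset_sum]
  · refine Finset.sum_congr rfl fun p _ => ?_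
    rw [integral_indicator_const (1:ℝ) (measurableSet_Bev p), smul_eq_mul, mul_one]
    rfl
  · intro p _
    exact (integrable_const (1:ℝ)).indicator (measurableSet_Bev p)

/-- invariance of the condition under coordinatewise order-isomorphisms. -/
lemma cond_comp {g : Fin d → ℝ → ℝ} {x : Fin n → Fin d → ℝ} {U : Set ℝ}
    (hg : ∀ c, ∀ a ∈ U, ∀ b ∈ U, (g c a ≤ g c b ↔ a ≤ b)) (hx : ∀ i c, x i c ∈ U)
    (p : Fin n × Fin n) :
    cond p (fun i c => g c (x i c)) ↔ cond p x := by
  unfold cond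
  refine and_congr Iff.rfl (and_congr ?_ (not_congr (exists_congr fun k => ?_)))
  · exact forall_congr' fun c => hg c _ (hx _ _) _ (hx _ _)
  · refine and_congr Iff.rfl (and_congr Iff.rfl (and_congr ?_ ?_))
    · exact forall_congr' fun c => hg c _ (hx _ _) _ (hx _ _)
    · exact forall_congr' fun c => hg c _ (hx _ _) _ (hx _ _)

lemma N2count_comp {g : Fin d → ℝ → ℝ} {x : Fin n → Fin d → ℝ} {U : Set ℝ}
    (hg : ∀ c, ∀ a ∈ U, ∀ b ∈ U, (g c a ≤ g c b ↔ a ≤ b)) (hx : ∀ i c, x i c ∈ U) :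
    N2count (fun i c => g c (x i c)) = N2count x := by
  rw [N2count_eq, N2count_eq]
  congr 1
  ext p
  exact cond_comp hg hx p

/-- distribution freeness: expectation over any atomless product law equals the uniform one. -/
lemma transport (μs : Fin d → Measure ℝ) [∀ c, IsProbabilityMeasure (μs c)]
    (hμs : ∀ c x, μs c {x} = 0) :
    ∫ w, (N2count (flatten w) : ℝ) ∂(Measure.pi (fun q : Fin n × Fin d => μs q.2))
      = ∫ w, (N2count (flatten w) : ℝ) ∂(Measure.pi (fun _ : Fin n × Fin d => unif)) := by
  have hQmp : ∀ q : Fin n × Fin d, MeasurePreserving (Q (μs q.2)) unif (μs q.2) :=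
    fun q => ⟨measurable_Q _, map_Q _⟩
  have hmp : MeasurePreserving (fun w (q : Fin n × Fin d) => Q (μs q.2) (w q))
      (Measure.pi (fun _ => unif)) (Measure.pi (fun q => μs q.2)) :=
    measurePreserving_pi _ _ hQmp
  rw [← hmp.map_eq, integral_map hmp.measurable.aemeasurable
    measurable_N2flat.aestronglyMeasurable]
  apply integral_congr_ae
  have hfullmeas : MeasurableSet (univ.pi (fun _ : Fin n × Fin d => Ioo (0:ℝ) 1)) :=
    MeasurableSet.univ_pi fun _ => measurableSet_Ioo
  have hfull : (Measure.pi (fun _ : Fin n × Fin d => unif))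
      (univ.pi (fun _ : Fin n × Fin d => Ioo (0:ℝ) 1)) = 1 := by
    rw [Measure.pi_pi]
    have h1 : unif (Ioo (0:ℝ) 1) = 1 := by
      rw [unif, Measure.restrict_apply measurableSet_Ioo, inter_self, Real.volume_Ioo]
      norm_num
    simp [h1]
  have hae : ∀ᵐ w ∂(Measure.pi (fun _ : Fin n × Fin d => unif)),
      w ∈ univ.pi (fun _ : Fin n × Fin d => Ioo (0:ℝ) 1) := by
    rw [ae_iff]
    have : {w : Fin n × Fin d → ℝ | ¬ w ∈ univ.pi (fun _ : Fin n × Fin d => Ioo (0:ℝ) 1)}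
        = (univ.pi (fun _ : Fin n × Fin d => Ioo (0:ℝ) 1))ᶜ := rfl
    rw [this, measure_compl hfullmeas (by simp), hfull]
    simp
  refine hae.mono fun w hw => ?_
  have hw' : ∀ i (c : Fin d), w (i, c) ∈ Ioo (0:ℝ) 1 := by
    intro i c
    exact hw (i, c) (mem_univ _)
  have : (N2count (flatten (fun q : Fin n × Fin d => Q (μs q.2) (w q))) : ℕ)
      = N2count (flatten w) := by
    have := N2count_comp (g := fun c => Q (μs c)) (x := flatten w) (U := Ioo (0:ℝ) 1)
      (fun c a ha b hb => Q_le_Q_iff (μs c) (hμs c) ha hb) (fun i c => hw' i c)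
    exact this
  show (N2count (flatten fun q => Q (μs q.2) (w q)) : ℝ) = (N2count (flatten w) : ℝ)
  exact_mod_cast this

end N2

section Bounds

variable {n d : ℕ}

def Dev (n d : ℕ) (p : Fin n × Fin n) : Set (Fin n × Fin d → ℝ) :=
  {w | ∀ c, w (p.2, c) ≤ w (p.1, c)}

lemma Bev_subset_Dev (p : Fin n × Fin n) : Bev n d p ⊆ Dev n d p := fun w hw => hw.2.1

lemma measure_Dev (μs : Fin d → Measure ℝ) [∀ c, IsProbabilityMeasure (μs c)]
    (hμs : ∀ c x, μs c {x} = 0) {p : Fin n × Fin n} (hp : p.1 ≠ p.2) :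
    Measure.pi (fun q : Fin n × Fin d => μs q.2) (Dev n d p) = (2:ℝ≥0∞)⁻¹ ^ d := by
  classical
  set f : Fin d × Fin 2 → Fin n × Fin d := fun cb => (![p.1, p.2] cb.2, cb.1) with hf
  have hvinj : Function.Injective (![p.1, p.2]) := by
    intro i j hij
    fin_cases i <;> fin_cases j <;> simp_all
  have hfinj : Function.Injective f := by
    intro x y hxy
    have h2 : x.1 = y.1 := congrArg Prod.snd hxy
    have h1 : x.2 = y.2 := hvinj (congrArg Prod.fst hxy)
    exact Prod.ext h2 h1
  have hsetm : MeasurableSet {v : Fin d × Fin 2 → ℝ | ∀ c : Fin d, v (c, 1) ≤ v (c, 0)} := by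
    have : {v : Fin d × Fin 2 → ℝ | ∀ c : Fin d, v (c, 1) ≤ v (c, 0)}
        = ⋂ c : Fin d, {v : Fin d × Fin 2 → ℝ | v (c, 1) ≤ v (c, 0)} := by
      ext v; simp
    rw [this]
    exact MeasurableSet.iInter fun c =>
      measurableSet_le (measurable_pi_apply _) (measurable_pi_apply _)
  have hDev : Dev n d p = (fun w : Fin n × Fin d → ℝ => w ∘ f) ⁻¹'
      {v : Fin d × Fin 2 → ℝ | ∀ c : Fin d, v (c, 1) ≤ v (c, 0)} := by
    ext w
    simp only [Dev, mem_preimage, mem_setOf_eq, Function.comp_apply, hf,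
      Matrix.cons_val_zero, Matrix.cons_val_one, Matrix.head_cons]
  have hm1 : Measurable (fun w : Fin n × Fin d → ℝ => w ∘ f) :=
    measurable_pi_lambda _ fun j => measurable_pi_apply _
  rw [hDev, ← Measure.map_apply hm1 hsetm, map_comp_pi _ f hfinj]
  have hμeq : (fun cb : Fin d × Fin 2 => μs ((f cb).2)) = fun cb : Fin d × Fin 2 => μs cb.1 := rfl
  rw [hμeq]
  have hset2 : {v : Fin d × Fin 2 → ℝ | ∀ c : Fin d, v (c, 1) ≤ v (c, 0)}
      = (curryEquiv (Fin d) (Fin 2)) ⁻¹' (univ.pi fun _ : Fin d => {z : Fin 2 → ℝ | z 1 ≤ z 0}) := by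
    ext v
    rw [mem_preimage, Set.mem_univ_pi]
    rfl
  have hpim : MeasurableSet (univ.pi fun _ : Fin d => {z : Fin 2 → ℝ | z 1 ≤ z 0}) :=
    MeasurableSet.univ_pi fun _ =>
      measurableSet_le (measurable_pi_apply _) (measurable_pi_apply _)
  rw [hset2, ← Measure.map_apply (curryEquiv (Fin d) (Fin 2)).measurable hpim,
    map_curry (fun cb : Fin d × Fin 2 => μs cb.1), Measure.pi_pi]
  have hfac : ∀ c : Fin d,
      Measure.pi (fun _ : Fin 2 => μs c) {z : Fin 2 → ℝ | z 1 ≤ z 0} = 2⁻¹ := by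
    intro c
    have hps : {z : Fin 2 → ℝ | z 1 ≤ z 0}
        = (fun u : Fin 2 → ℝ => (u 0, u 1)) ⁻¹' {y : ℝ × ℝ | y.2 ≤ y.1} := rfl
    have hm2 : Measurable (fun u : Fin 2 → ℝ => (u 0, u 1)) :=
      (measurable_pi_apply _).prodMk (measurable_pi_apply _)
    have hAm : MeasurableSet {y : ℝ × ℝ | y.2 ≤ y.1} :=
      measurableSet_le measurable_snd measurable_fst
    rw [hps, ← Measure.map_apply hm2 hAm]
    have hmap : Measure.map (fun u : Fin 2 → ℝ => (u 0, u 1))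
        (Measure.pi (fun _ : Fin 2 => μs c)) = (μs c).prod (μs c) := by
      rw [show (fun u : Fin 2 → ℝ => (u 0, u 1)) = ⇑(MeasurableEquiv.finTwoArrow (α := ℝ)) from rfl]
      exact (measurePreserving_finTwoArrow (μs c)).map_eq
    rw [hmap, prod_half (μs c) (hμs c), one_div]
  simp_rw [hfac]
  rw [Finset.prod_const, Finset.card_univ, Fintype.card_fin]

/-- upper bound: conjunct (2). -/
lemma E_upper (μs : Fin d → Measure ℝ) [∀ c, IsProbabilityMeasure (μs c)]
    (hμs : ∀ c x, μs c {x} = 0) :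
    ∫ w, (N2count (flatten w) : ℝ) ∂(Measure.pi (fun q : Fin n × Fin d => μs q.2))
      ≤ n * ((n:ℝ) - 1) / 2 ^ d := by
  rw [integral_N2]
  have hbound : ∀ p ∈ Finset.univ.offDiag,
      ((Measure.pi (fun q : Fin n × Fin d => μs q.2)) (Bev n d p)).toReal ≤ ((2:ℝ)⁻¹) ^ d := by
    intro p hp
    have hp' : p.1 ≠ p.2 := (Finset.mem_offDiag.1 hp).2.2
    have hmono : (Measure.pi (fun q : Fin n × Fin d => μs q.2)) (Bev n d p)
        ≤ (Measure.pi (fun q : Fin n × Fin d => μs q.2)) (Dev n d p) :=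
      measure_mono (Bev_subset_Dev p)
    have hD := measure_Dev μs hμs hp'
    calc ((Measure.pi (fun q : Fin n × Fin d => μs q.2)) (Bev n d p)).toReal
        ≤ ((Measure.pi (fun q : Fin n × Fin d => μs q.2)) (Dev n d p)).toReal :=
          ENNReal.toReal_mono (measure_ne_top _ _) hmono
      _ = ((2:ℝ)⁻¹) ^ d := by
          rw [hD, ENNReal.toReal_pow, ENNReal.toReal_inv]
          norm_num
  calc ∑ p ∈ Finset.univ.offDiag,
        ((Measure.pi (fun q : Fin n × Fin d => μs q.2)) (Bev n d p)).toReal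
      ≤ ∑ _p ∈ Finset.univ.offDiag, ((2:ℝ)⁻¹) ^ d := Finset.sum_le_sum hbound
    _ = (Finset.univ.offDiag.card : ℝ) * ((2:ℝ)⁻¹) ^ d := by
        rw [Finset.sum_const, nsmul_eq_mul]
    _ = n * ((n:ℝ) - 1) / 2 ^ d := by
        rw [Finset.offDiag_card, Finset.card_univ, Fintype.card_fin]
        have hle : n ≤ n * n := by
          cases n with
          | zero => simp
          | succ m => exact Nat.le_mul_of_pos_left _ (Nat.succ_pos m)
        rw [Nat.cast_sub hle]
        push_cast
        have h2 : ((2:ℝ)) ^ d ≠ 0 := by positivity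
        rw [inv_pow]
        ring

set_option maxHeartbeats 1600000 in
lemma pair_lower (hd : 2 ≤ d) {p : Fin n × Fin n} (hp : p.1 ≠ p.2) :
    Measure.pi (fun _ : Fin n × Fin (d-1) => unif) (Bev n (d-1) p) * 2⁻¹
      ≤ Measure.pi (fun _ : Fin n × Fin d => unif) (Bev n d p) := by
  classical
  set ℓ : Fin d := ⟨d - 1, by omega⟩ with hℓ
  set pr : Fin n × Fin d → Prop := fun q => q.2 ≠ ℓ with hpr
  set f1 : Fin n × Fin (d-1) → {q : Fin n × Fin d // pr q} :=
    fun q' => ⟨(q'.1, ⟨q'.2.1, by omega⟩), by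
      simp only [hpr]
      intro hcon
      have := congrArg Fin.val hcon
      simp only [hℓ] at this
      omega⟩ with hf1
  have hf1inj : Function.Injective f1 := by
    intro x y hxy
    have h1 := congrArg (fun z : {q : Fin n × Fin d // pr q} => z.val.1) hxy
    have h2 := congrArg (fun z : {q : Fin n × Fin d // pr q} => z.val.2.val) hxy
    simp only [hf1] at h1 h2
    exact Prod.ext h1 (Fin.ext h2)
  set A : Set ({q : Fin n × Fin d // pr q} → ℝ) :=
    (fun v : {q : Fin n × Fin d // pr q} → ℝ => v ∘ f1) ⁻¹' (Bev n (d-1) p) with hA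
  set a1 : {q : Fin n × Fin d // ¬ pr q} := ⟨(p.1, ℓ), by simp [hpr]⟩ with ha1
  set a2 : {q : Fin n × Fin d // ¬ pr q} := ⟨(p.2, ℓ), by simp [hpr]⟩ with ha2
  have ha12 : a1 ≠ a2 := by
    intro hcon
    apply hp
    have := congrArg Subtype.val hcon
    exact congrArg Prod.fst this
  set C : Set ({q : Fin n × Fin d // ¬ pr q} → ℝ) :=
    (fun v : {q : Fin n × Fin d // ¬ pr q} → ℝ => (v a1, v a2)) ⁻¹' {y : ℝ × ℝ | y.2 ≤ y.1}
    with hC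
  have hmf1 : Measurable (fun v : {q : Fin n × Fin d // pr q} → ℝ => v ∘ f1) :=
    measurable_pi_lambda _ fun j => measurable_pi_apply _
  have hmpair : Measurable (fun v : {q : Fin n × Fin d // ¬ pr q} → ℝ => (v a1, v a2)) :=
    (measurable_pi_apply _).prodMk (measurable_pi_apply _)
  have hAmeas : MeasurableSet A := hmf1 (measurableSet_Bev p)
  have hCmeas : MeasurableSet C :=
    hmpair (measurableSet_le measurable_snd measurable_fst)
  have hsub : {w : Fin n × Fin d → ℝ | (fun i : {q // pr q} => w i) ∈ A}
      ∩ {w : Fin n × Fin d → ℝ | (fun i : {q // ¬ pr q} => w i) ∈ C} ⊆ Bev n d p := by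
    rintro w ⟨hwA, hwC⟩
    have hwA' : cond p (fun i (c' : Fin (d-1)) => w (i, ⟨c'.1, by omega⟩)) := hwA
    have hwC' : w (p.2, ℓ) ≤ w (p.1, ℓ) := hwC
    refine ⟨hp, ?_, ?_⟩
    · intro c
      by_cases hc : c = ℓ
      · rw [hc]; exact hwC'
      · have hcv : c.1 < d - 1 := by
          have h1 := c.isLt
          have h2 : c.1 ≠ d - 1 := fun hcon => hc (Fin.ext (by simp [hℓ, hcon]))
          omega
        have := hwA'.2.1 ⟨c.1, hcv⟩
        simpa [flatten] using this
    · rintro ⟨k, hk1, hk2, hkd1, hkd2⟩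
      apply hwA'.2.2
      exact ⟨k, hk1, hk2, fun c' => hkd1 ⟨c'.1, by omega⟩, fun c' => hkd2 ⟨c'.1, by omega⟩⟩
  have hsplit := pi_split (fun _ : Fin n × Fin d => unif) pr hAmeas hCmeas
  have hAval : Measure.pi (fun _ : {q : Fin n × Fin d // pr q} => unif) A
      = Measure.pi (fun _ : Fin n × Fin (d-1) => unif) (Bev n (d-1) p) := by
    rw [hA, ← Measure.map_apply hmf1 (measurableSet_Bev p)]
    rw [map_comp_pi (fun _ : {q : Fin n × Fin d // pr q} => unif) f1 hf1inj]
  have hCval : Measure.pi (fun _ : {q : Fin n × Fin d // ¬ pr q} => unif) C = 2⁻¹ := by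
    rw [hC, ← Measure.map_apply hmpair (measurableSet_le measurable_snd measurable_fst)]
    rw [map_pair (fun _ : {q : Fin n × Fin d // ¬ pr q} => unif) ha12]
    rw [prod_half unif unif_atomless, one_div]
  calc Measure.pi (fun _ : Fin n × Fin (d-1) => unif) (Bev n (d-1) p) * 2⁻¹
      = Measure.pi (fun _ : {q : Fin n × Fin d // pr q} => unif) A
        * Measure.pi (fun _ : {q : Fin n × Fin d // ¬ pr q} => unif) C := by
        rw [hAval, hCval]
    _ = Measure.pi (fun _ : Fin n × Fin d => unif)
          ({w : Fin n × Fin d → ℝ | (fun i : {q // pr q} => w i) ∈ A}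
            ∩ {w : Fin n × Fin d → ℝ | (fun i : {q // ¬ pr q} => w i) ∈ C}) := hsplit.symm
    _ ≤ Measure.pi (fun _ : Fin n × Fin d => unif) (Bev n d p) := measure_mono hsub

/-- lower bound comparison of uniform expectations: conjunct (1) core. -/
lemma E_lower (hd : 2 ≤ d) :
    (1/2 : ℝ) * ∫ w, (N2count (flatten w) : ℝ)
        ∂(Measure.pi (fun _ : Fin n × Fin (d-1) => unif))
      ≤ ∫ w, (N2count (flatten w) : ℝ) ∂(Measure.pi (fun _ : Fin n × Fin d => unif)) := by
  rw [integral_N2, integral_N2, Finset.mul_sum]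
  apply Finset.sum_le_sum
  intro p hp
  have hp' : p.1 ≠ p.2 := (Finset.mem_offDiag.1 hp).2.2
  have hkey := pair_lower (n := n) hd hp'
  have h1 : (1/2 : ℝ) * ((Measure.pi (fun _ : Fin n × Fin (d-1) => unif)) (Bev n (d-1) p)).toReal
      = ((Measure.pi (fun _ : Fin n × Fin (d-1) => unif)) (Bev n (d-1) p) * 2⁻¹).toReal := by
    rw [ENNReal.toReal_mul]
    have : ((2:ℝ≥0∞)⁻¹).toReal = 1/2 := by
      rw [ENNReal.toReal_inv]
      norm_num
    rw [this]
    ring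
  rw [h1]
  exact ENNReal.toReal_mono (measure_ne_top _ _) hkey

end Bounds

/-- **Monotonicity in dimension of the expected number of non-redundant
constraints**: for `d ≥ 2`, `(1/2) E[N₂(n,d-1)] ≤ E[N₂(n,d)] ≤ n(n-1)/2^d`,
where the counts are for i.i.d. samples from arbitrary products of atomless
distributions; equivalently `S(n,d-1)/2 ≤ S(n,d) ≤ n(n-1)/2^d`. -/
theorem monotonicity_in_dimension
    (d n : ℕ) (hd : 2 ≤ d)
    -- d-dimensional sample:
    (ν : Fin d → Measure ℝ) (hν_prob : ∀ i, IsProbabilityMeasure (ν i))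
    (hν_atomless : ∀ i, ∀ x : ℝ, ν i {x} = 0)
    {Ω : Type*} [MeasurableSpace Ω] (P : Measure Ω) [IsProbabilityMeasure P]
    (X : Fin n → Ω → (Fin d → ℝ)) (hX_meas : ∀ i, Measurable (X i))
    (hX_indep : ProbabilityTheory.iIndepFun X P)
    (hX_law : ∀ i, Measure.map (X i) P = Measure.pi ν)
    -- (d-1)-dimensional sample (from an arbitrary atomless product law):
    (ν' : Fin (d - 1) → Measure ℝ) (hν'_prob : ∀ i, IsProbabilityMeasure (ν' i))
    (hν'_atomless : ∀ i, ∀ x : ℝ, ν' i {x} = 0)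
    {Ω' : Type*} [MeasurableSpace Ω'] (P' : Measure Ω') [IsProbabilityMeasure P']
    (Y : Fin n → Ω' → (Fin (d - 1) → ℝ)) (hY_meas : ∀ i, Measurable (Y i))
    (hY_indep : ProbabilityTheory.iIndepFun Y P')
    (hY_law : ∀ i, Measure.map (Y i) P' = Measure.pi ν') :
    ((1 : ℝ) / 2) * ∫ ω, (N2count (fun i => Y i ω) : ℝ) ∂P'
        ≤ ∫ ω, (N2count (fun i => X i ω) : ℝ) ∂P ∧
    ∫ ω, (N2count (fun i => X i ω) : ℝ) ∂P ≤ n * ((n : ℝ) - 1) / 2 ^ d ∧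
    S n (d - 1) / 2 ≤ S n d ∧
    S n d ≤ n * ((n : ℝ) - 1) / 2 ^ d := by
  haveI : ∀ i, IsProbabilityMeasure (ν i) := hν_prob
  haveI : ∀ i, IsProbabilityMeasure (ν' i) := hν'_prob
  have hmX : Measurable (fun ω (q : Fin n × Fin d) => X q.1 ω q.2) :=
    measurable_pi_lambda _ (fun q => (measurable_pi_apply q.2).comp (hX_meas q.1))
  have hmY : Measurable (fun ω (q : Fin n × Fin (d - 1)) => Y q.1 ω q.2) :=
    measurable_pi_lambda _ (fun q => (measurable_pi_apply q.2).comp (hY_meas q.1))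
  have hjX := map_joint ν P X hX_meas hX_indep hX_law
  have hjY := map_joint ν' P' Y hY_meas hY_indep hY_law
  have hIX : ∫ w, (N2count (flatten w) : ℝ) ∂(Measure.pi (fun q : Fin n × Fin d => ν q.2))
      = ∫ ω, (N2count (fun i => X i ω) : ℝ) ∂P := by
    rw [← hjX, integral_map hmX.aemeasurable measurable_N2flat.aestronglyMeasurable]
    rfl
  have hIY : ∫ w, (N2count (flatten w) : ℝ)
        ∂(Measure.pi (fun q : Fin n × Fin (d - 1) => ν' q.2))
      = ∫ ω, (N2count (fun i => Y i ω) : ℝ) ∂P' := by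
    rw [← hjY, integral_map hmY.aemeasurable measurable_N2flat.aestronglyMeasurable]
    rfl
  have hTX := transport (n := n) ν hν_atomless
  have hTY := transport (n := n) ν' hν'_atomless
  refine ⟨?_, ?_, (S_ineq n d hd).1, (S_ineq n d hd).2⟩
  · rw [← hIX, ← hIY, hTX, hTY]
    exact E_lower (n := n) hd
  · rw [← hIX]
    exact E_upper ν hν_atomless

end OrthoConstraints
end
end
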